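/- arXiv:2110.02456 — 6 statements merged into one kernel-verified Lean document; each statement's English description precedes it below -/
import Mathlib

section
/- For every integer k ≥ 1, every dimension d ≥ 1, every matrix W = [w₁ ⋯ w_k] ∈ ℝ^{d×k} and every vector b = (b₁,…,b_k) ∈ ℝ^k, the number of distinct sign vectors |𝔖_{W,b}| = |{sgn(Wᵀx + b) : x ∈ ℝ^d}| is at most binom(k, ≤ d). -/
/-- The sign function: `sgn t = 1` if `t ≥ 0`, and `-1` otherwise. -/
noncomputable def sgn (t : ℝ) : ℝ := if 0 ≤ t then 1 else -1

/-- The sign vector `sgn(Wᵀx + b)` of the hyperplane arrangement `(W, b)` at `x`. -/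
noncomputable def signVec {d k : ℕ} (W : Matrix (Fin d) (Fin k) ℝ) (b : Fin k → ℝ)
    (x : Fin d → ℝ) : Fin k → ℝ :=
  fun j => sgn ((∑ i, W i j * x i) + b j)

/-- `binomLe k r = binom(k, ≤ r)`, i.e. `2^k` if `k < r` and `C(k,0) + ⋯ + C(k,r)` if `k ≥ r`. -/
def binomLe (k r : ℕ) : ℕ :=
  if k < r then 2 ^ k else ∑ i ∈ Finset.range (r + 1), k.choose i

/-- Key geometric fact: a set of `d+1` hyperplanes in `ℝ^d` cannot realize all sign patterns. -/
lemma aux_no_shatter {d k : ℕ} (W : Matrix (Fin d) (Fin k) ℝ) (b : Fin k → ℝ)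
    (T : Finset (Fin k)) (hTcard : T.card = d + 1)
    (hsh : ∀ t ⊆ T, ∃ x : Fin d → ℝ, ∀ j ∈ T, (j ∈ t ↔ 0 ≤ (∑ i, W i j * x i) + b j)) :
    False := by
  classical
  set f : Fin k → (Fin d → ℝ) → ℝ := fun j x => (∑ i, W i j * x i) + b j with hf
  set v : Option {j // j ∈ T} → ((Fin d → ℝ) × ℝ) :=
    fun o => Option.elim o ((0 : Fin d → ℝ), (1 : ℝ)) (fun j => (fun i => W i j.1, b j.1)) with hv
  have hrank : Module.finrank ℝ ((Fin d → ℝ) × ℝ) = d + 1 := by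
    simp [Module.finrank_prod]
  have hdep : ¬ LinearIndependent ℝ v := by
    intro h
    have := h.fintype_card_le_finrank
    rw [hrank] at this
    simp [Fintype.card_option, Fintype.card_coe, hTcard] at this
  obtain ⟨g, hg, i0, hi0⟩ := Fintype.not_linearIndependent_iff.1 hdep
  rw [Fintype.sum_option] at hg
  set lam : Fin k → ℝ := fun j => if h : j ∈ T then g (some ⟨j, h⟩) else 0 with hlam
  have hattach : ∀ c : Fin k → ℝ, ∑ j ∈ T.attach, g (some j) * c j.1 = ∑ j ∈ T, lam j * c j := by
    intro c
    rw [← Finset.sum_attach T (fun j => lam j * c j)]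
    refine Finset.sum_congr rfl fun j _ => ?_
    simp [hlam]
  -- first components: the linear parts cancel
  have h1 : ∀ i, ∑ j ∈ T, lam j * W i j = 0 := by
    intro i
    have h := congrFun (congrArg Prod.fst hg) i
    simp only [Prod.fst_add, Prod.fst_sum, Prod.smul_fst, hv, Option.elim, smul_zero,
      Pi.add_apply, Finset.sum_apply, Pi.smul_apply, Pi.zero_apply, smul_eq_mul,
      zero_add, Finset.univ_eq_attach, Prod.fst_zero] at h
    calc ∑ j ∈ T, lam j * W i j = ∑ j ∈ T.attach, g (some j) * W i j.1 := (hattach _).symm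
      _ = 0 := h
  -- second components: the constants sum to `-(g none)`
  have h2 : ∑ j ∈ T, lam j * b j = -(g none) := by
    have h := congrArg Prod.snd hg
    simp only [Prod.snd_add, Prod.snd_sum, Prod.smul_snd, hv, Option.elim, smul_eq_mul,
      mul_one, Prod.snd_zero, Finset.univ_eq_attach] at h
    have h' : ∑ j ∈ T.attach, g (some j) * b j.1 = -(g none) := by linarith [h]
    calc ∑ j ∈ T, lam j * b j = ∑ j ∈ T.attach, g (some j) * b j.1 := (hattach b).symm
      _ = -(g none) := h'
  have hsum : ∀ x : Fin d → ℝ, ∑ j ∈ T, lam j * f j x = -(g none) := by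
    intro x
    have expand : ∑ j ∈ T, lam j * f j x
        = ∑ i, (∑ j ∈ T, lam j * W i j) * x i + ∑ j ∈ T, lam j * b j := by
      simp only [hf, mul_add]
      rw [Finset.sum_add_distrib]
      congr 1
      simp only [Finset.mul_sum]
      rw [Finset.sum_comm]
      refine Finset.sum_congr rfl fun i _ => ?_
      rw [Finset.sum_mul]
      refine Finset.sum_congr rfl fun j _ => ?_
      ring
    rw [expand, h2]
    simp [h1]
  -- some coefficient on a hyperplane is nonzero
  have hex : ∃ j ∈ T, lam j ≠ 0 := by
    by_contra h
    push_neg at h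
    have hzero : g none = 0 := by
      have := hsum 0
      rw [Finset.sum_congr rfl (fun j hj => by rw [h j hj, zero_mul])] at this
      simpa using this.symm
    rcases i0 with _ | j
    · exact hi0 hzero
    · exact hi0 (by simpa [hlam, j.2] using h j.1 j.2)
  obtain ⟨j0, hj0T, hj0⟩ := hex
  obtain ⟨x1, hx1⟩ := hsh (T.filter (fun j => 0 < lam j)) (Finset.filter_subset _ _)
  obtain ⟨x2, hx2⟩ := hsh (T.filter (fun j => lam j < 0)) (Finset.filter_subset _ _)
  have hx1' : ∀ j ∈ T, (0 < lam j ↔ 0 ≤ f j x1) := by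
    intro j hj
    have := hx1 j hj
    simpa [Finset.mem_filter, hj] using this
  have hx2' : ∀ j ∈ T, (lam j < 0 ↔ 0 ≤ f j x2) := by
    intro j hj
    have := hx2 j hj
    simpa [Finset.mem_filter, hj] using this
  -- at x1 every term is nonnegative; strictly positive where lam j < 0
  have hterm1 : ∀ j ∈ T, 0 ≤ lam j * f j x1 := by
    intro j hj
    rcases lt_trichotomy (lam j) 0 with h | h | h
    · have hneg : f j x1 < 0 := by
        by_contra hc
        push_neg at hc
        exact absurd ((hx1' j hj).2 hc) (by linarith)
      exact le_of_lt (mul_pos_of_neg_of_neg h hneg)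
    · simp [h]
    · exact mul_nonneg (le_of_lt h) ((hx1' j hj).1 h)
  have hterm1' : lam j0 < 0 → 0 < lam j0 * f j0 x1 := by
    intro h
    have hneg : f j0 x1 < 0 := by
      by_contra hc
      push_neg at hc
      exact absurd ((hx1' j0 hj0T).2 hc) (by linarith)
    exact mul_pos_of_neg_of_neg h hneg
  -- at x2 every term is nonpositive; strictly negative where lam j > 0
  have hterm2 : ∀ j ∈ T, lam j * f j x2 ≤ 0 := by
    intro j hj
    rcases lt_trichotomy (lam j) 0 with h | h | h
    · exact mul_nonpos_of_nonpos_of_nonneg (le_of_lt h) ((hx2' j hj).1 h)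
    · simp [h]
    · have hneg : f j x2 < 0 := by
        by_contra hc
        push_neg at hc
        exact absurd ((hx2' j hj).2 hc) (by linarith)
      exact le_of_lt (mul_neg_of_pos_of_neg h hneg)
  have hterm2' : 0 < lam j0 → lam j0 * f j0 x2 < 0 := by
    intro h
    have hneg : f j0 x2 < 0 := by
      by_contra hc
      push_neg at hc
      exact absurd ((hx2' j0 hj0T).2 hc) (by linarith)
    exact mul_neg_of_pos_of_neg h hneg
  have hS1 : 0 ≤ ∑ j ∈ T, lam j * f j x1 := Finset.sum_nonneg hterm1
  have hS2 : ∑ j ∈ T, lam j * f j x2 ≤ 0 := Finset.sum_nonpos hterm2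
  rw [hsum x1] at hS1
  rw [hsum x2] at hS2
  rcases hj0.lt_or_gt with h | h
  · have : 0 < ∑ j ∈ T, lam j * f j x1 :=
      Finset.sum_pos' hterm1 ⟨j0, hj0T, hterm1' h⟩
    rw [hsum x1] at this
    linarith
  · have : ∑ j ∈ T, lam j * f j x2 < 0 := by
      have : 0 < ∑ j ∈ T, -(lam j * f j x2) :=
        Finset.sum_pos' (fun j hj => by linarith [hterm2 j hj]) ⟨j0, hj0T, by linarith [hterm2' h]⟩
      rw [Finset.sum_neg_distrib] at this
      linarith
    rw [hsum x2] at this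
    linarith

/-- The number of distinct sign vectors of a `k`-hyperplane arrangement in `ℝ^d`
is at most `binom(k, ≤ d)`. -/
theorem number_of_sign_vectors_le (d k : ℕ) (hd : 1 ≤ d) (hk : 1 ≤ k)
    (W : Matrix (Fin d) (Fin k) ℝ) (b : Fin k → ℝ) :
    Set.ncard {s : Fin k → ℝ | ∃ x : Fin d → ℝ, s = signVec W b x} ≤ binomLe k d := by
  classical
  set S : Set (Fin k → ℝ) := {s : Fin k → ℝ | ∃ x : Fin d → ℝ, s = signVec W b x} with hS
  set f : Fin k → (Fin d → ℝ) → ℝ := fun j x => (∑ i, W i j * x i) + b j with hf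
  set A : Set (Finset (Fin k)) :=
    {u | ∃ x : Fin d → ℝ, u = Finset.univ.filter (fun j => 0 ≤ f j x)} with hA
  have hAfin : A.Finite := Set.toFinite A
  set 𝒜 : Finset (Finset (Fin k)) := hAfin.toFinset with h𝒜
  -- step 1: injection of sign vectors into A
  set G : (Fin k → ℝ) → Finset (Fin k) := fun s => Finset.univ.filter (fun j => s j = 1) with hG
  have hsgn : ∀ (x : Fin d → ℝ) (j : Fin k), signVec W b x j = 1 ↔ 0 ≤ f j x := by
    intro x j
    unfold signVec sgn
    split
    · rename_i h; exact iff_of_true rfl h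
    · rename_i h
      constructor
      · intro h1; norm_num at h1
      · intro h1; exact absurd h1 h
  have hmaps : ∀ s ∈ S, G s ∈ A := by
    rintro s ⟨x, rfl⟩
    refine ⟨x, ?_⟩
    ext j
    simp [hG, hsgn x j]
  have hinj : Set.InjOn G S := by
    rintro s ⟨x, rfl⟩ s' ⟨x', rfl⟩ hGs
    funext j
    have hmem : (signVec W b x j = 1) ↔ (signVec W b x' j = 1) := by
      have := Finset.ext_iff.1 hGs j
      simpa [hG] using this
    have hv : ∀ y : Fin d → ℝ, signVec W b y j = 1 ∨ signVec W b y j = -1 := by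
      intro y
      unfold signVec sgn
      split <;> simp
    rcases hv x with h | h <;> rcases hv x' with h' | h'
    · rw [h, h']
    · rw [h] at hmem; rw [hmem.1 rfl] at h'; norm_num at h'
    · rw [h'] at hmem; rw [hmem.2 rfl] at h; norm_num at h
    · rw [h, h']
  have hstep1 : S.ncard ≤ 𝒜.card := by
    have h1 : S.ncard = (G '' S).ncard := (Set.ncard_image_of_injOn hinj).symm
    have h2 : G '' S ⊆ A := by
      rintro u ⟨s, hs, rfl⟩
      exact hmaps s hs
    have h3 : (G '' S).ncard ≤ A.ncard := Set.ncard_le_ncard h2 hAfin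
    rw [h1]
    calc (G '' S).ncard ≤ A.ncard := h3
      _ = 𝒜.card := Set.ncard_eq_toFinset_card A hAfin
  -- step 2: VC dimension bound
  have hvc : 𝒜.vcDim ≤ d := by
    rw [Finset.vcDim]
    refine Finset.sup_le fun s hs => ?_
    rw [Finset.mem_shatterer] at hs
    by_contra hc
    push_neg at hc
    obtain ⟨T, hTs, hTcard⟩ := Finset.exists_subset_card_eq (show d + 1 ≤ s.card from hc)
    have hshT : 𝒜.Shatters T := hs.mono_right hTs
    refine aux_no_shatter W b T hTcard fun t ht => ?_
    obtain ⟨u, hu, hTu⟩ := hshT ht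
    rw [h𝒜, Set.Finite.mem_toFinset] at hu
    obtain ⟨x, rfl⟩ := hu
    refine ⟨x, fun j hj => ?_⟩
    constructor
    · intro hjt
      rw [← hTu] at hjt
      have := (Finset.mem_inter.1 hjt).2
      simpa using this
    · intro hfx
      rw [← hTu]
      exact Finset.mem_inter.2 ⟨hj, by simpa using hfx⟩
  -- step 3: Sauer-Shelah
  have hSS : 𝒜.card ≤ ∑ i ∈ Finset.range (d + 1), k.choose i := by
    calc 𝒜.card ≤ 𝒜.shatterer.card := Finset.card_le_card_shatterer 𝒜
      _ ≤ ∑ i ∈ Finset.Iic 𝒜.vcDim, (Fintype.card (Fin k)).choose i :=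
          Finset.card_shatterer_le_sum_vcDim
      _ ≤ ∑ i ∈ Finset.Iic d, k.choose i := by
          simp only [Fintype.card_fin]
          exact Finset.sum_le_sum_of_subset (Finset.Iic_subset_Iic.2 hvc)
      _ = ∑ i ∈ Finset.range (d + 1), k.choose i := by
          congr 1
          ext i
          simp [Nat.lt_succ_iff]
  have hfinal : ∑ i ∈ Finset.range (d + 1), k.choose i ≤ binomLe k d := by
    rw [binomLe]
    split
    · rename_i hkd
      have hsub : Finset.range (k + 1) ⊆ Finset.range (d + 1) := by
        apply Finset.range_subset_range.2; omega
      rw [← Finset.sum_subset hsub (fun i _ hi => by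
        simp only [Finset.mem_range, not_lt] at hi ⊢
        exact Nat.choose_eq_zero_of_lt (by omega))]
      rw [Nat.sum_range_choose]
    · exact le_refl _
  exact le_trans hstep1 (le_trans hSS hfinal)
end

section
/- For every integer k ≥ 1, every dimension d ≥ 1, and every integer r with 1 ≤ r ≤ min(d,k): if W ∈ ℝ^{d×k} has rank(W) ≤ r and b ∈ ℝ^k, then the number of distinct sign vectors |{sgn(Wᵀx + b) : x ∈ ℝ^d}| is at most binom(k, ≤ r). -/
lemma sgn_eq_one_iff (t : ℝ) : sgn t = 1 ↔ 0 ≤ t := by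
  constructor
  · intro h1
    by_contra hc
    rw [sgn, if_neg hc] at h1
    norm_num at h1
  · intro h
    simp [sgn, h]

lemma card_filter_card_le (k r : ℕ) :
    ((Finset.univ : Finset (Finset (Fin k))).filter (fun A => A.card ≤ r)).card =
      ∑ i ∈ Finset.range (r + 1), k.choose i := by
  have h : ((Finset.univ : Finset (Finset (Fin k))).filter (fun A => A.card ≤ r)) =
      (Finset.range (r + 1)).biUnion (fun i => Finset.powersetCard i Finset.univ) := by
    ext A
    simp [Finset.mem_powersetCard, Nat.lt_succ_iff]
  rw [h, Finset.card_biUnion]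
  · simp [Finset.card_powersetCard]
  · intro i _ j _ hij
    simp only [Finset.disjoint_left, Finset.mem_powersetCard]
    rintro A ⟨-, rfl⟩ ⟨-, h2⟩
    exact hij h2

/-- If `W ∈ ℝ^{d×k}` has rank at most `r` (with `1 ≤ r ≤ min(d,k)`), then the number of
distinct sign vectors `sgn(Wᵀx + b)`, `x ∈ ℝ^d`, is at most `binom(k, ≤ r)`. -/
theorem number_of_sign_vectors_le_of_rank_le (d k r : ℕ) (hd : 1 ≤ d) (hk : 1 ≤ k)
    (hr : 1 ≤ r) (hrd : r ≤ d) (hrk : r ≤ k)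
    (W : Matrix (Fin d) (Fin k) ℝ) (hW : W.rank ≤ r) (b : Fin k → ℝ) :
    Set.ncard {s : Fin k → ℝ | ∃ x : Fin d → ℝ, s = signVec W b x} ≤ binomLe k r := by
  classical
  set S := {s : Fin k → ℝ | ∃ x : Fin d → ℝ, s = signVec W b x} with hS
  set φ : (Fin k → ℝ) → Finset (Fin k) :=
    fun s => Finset.univ.filter (fun j => s j = 1) with hφ
  -- values of signVec are ±1
  have hval : ∀ s ∈ S, ∀ j, s j = 1 ∨ s j = -1 := by
    rintro s ⟨x, rfl⟩ j
    unfold signVec sgn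
    split <;> simp
  have hinj : Set.InjOn φ S := by
    intro s hs s' hs' h
    funext j
    have h1 : s j = 1 ↔ s' j = 1 := by
      constructor <;> intro hj
      · have : j ∈ φ s := by simp [hφ, hj]
        rw [h] at this; simpa [hφ] using this
      · have : j ∈ φ s' := by simp [hφ, hj]
        rw [← h] at this; simpa [hφ] using this
    rcases hval s hs j with h2 | h2 <;> rcases hval s' hs' j with h3 | h3 <;>
      simp_all <;> norm_num at *
  have himfin : (φ '' S).Finite := Set.toFinite _
  have hSfin : S.Finite := Set.Finite.of_finite_image himfin hinj
  have hcard : S.ncard = himfin.toFinset.card := by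
    rw [← Set.ncard_image_of_injOn hinj, Set.ncard_eq_toFinset_card _ himfin]
  set 𝒜 : Finset (Finset (Fin k)) := himfin.toFinset with h𝒜
  -- membership description of 𝒜
  have hmem : ∀ u ∈ 𝒜, ∃ x : Fin d → ℝ,
      ∀ j, j ∈ u ↔ 0 ≤ (∑ i, W i j * x i) + b j := by
    intro u hu
    rw [h𝒜, Set.Finite.mem_toFinset] at hu
    obtain ⟨s, ⟨x, rfl⟩, rfl⟩ := hu
    refine ⟨x, fun j => ?_⟩
    simp [hφ, signVec, sgn_eq_one_iff]
  -- key: every shattered set has card ≤ r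
  have hshat : ∀ A : Finset (Fin k), 𝒜.Shatters A → A.card ≤ r := by
    intro A hA
    by_contra hcard
    push_neg at hcard
    obtain ⟨B, hBA, hBcard⟩ := A.exists_subset_card_eq hcard
    have hB : 𝒜.Shatters B := hA.mono_right hBA
    -- columns indexed by B are linearly dependent
    have hdep : ¬ LinearIndependent ℝ (fun (j : ↥B) => W.transpose j.1) := by
      intro hli
      have h1 : Module.finrank ℝ (Submodule.span ℝ
          (Set.range (fun (j : ↥B) => W.transpose j.1))) = r + 1 := by
        rw [finrank_span_eq_card hli]
        simp [hBcard]
      have h2 : Submodule.span ℝ (Set.range (fun (j : ↥B) => W.transpose j.1)) ≤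
          Submodule.span ℝ (Set.range W.transpose) :=
        Submodule.span_mono (by rintro _ ⟨j, rfl⟩; exact ⟨j, rfl⟩)
      have h3 := Submodule.finrank_mono h2
      rw [h1] at h3
      have h4 := Matrix.rank_eq_finrank_span_cols W
      have h5 : r + 1 ≤ W.rank := by rw [h4]; exact h3
      omega
    rw [Fintype.not_linearIndependent_iff] at hdep
    obtain ⟨g, hg0, j₀, hj₀⟩ := hdep
    -- extend g to Fin k
    set a : Fin k → ℝ := fun j => if h : j ∈ B then g ⟨j, h⟩ else 0 with ha
    have hsum0 : ∀ i, ∑ j ∈ B, a j * W i j = 0 := by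
      intro i
      have := congrFun hg0 i
      simp only [Finset.sum_apply, Pi.smul_apply, smul_eq_mul, Pi.zero_apply,
        Matrix.transpose_apply] at this
      rw [← Finset.sum_attach B (fun j => a j * W i j)]
      rw [← this]
      apply Finset.sum_congr rfl
      intro j _
      simp [ha, j.2]
    set f : Fin k → (Fin d → ℝ) → ℝ := fun j x => (∑ i, W i j * x i) + b j with hf
    set C : ℝ := ∑ j ∈ B, a j * b j with hC
    have hkey : ∀ x : Fin d → ℝ, ∑ j ∈ B, a j * f j x = C := by
      intro x
      have hz : ∑ j ∈ B, a j * ∑ i, W i j * x i = 0 := by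
        calc ∑ j ∈ B, a j * ∑ i, W i j * x i
            = ∑ j ∈ B, ∑ i, a j * W i j * x i := by
              refine Finset.sum_congr rfl fun j _ => ?_
              rw [Finset.mul_sum]
              exact Finset.sum_congr rfl fun i _ => (mul_assoc _ _ _).symm
          _ = ∑ i, ∑ j ∈ B, a j * W i j * x i := Finset.sum_comm
          _ = ∑ i, (∑ j ∈ B, a j * W i j) * x i := by
              refine Finset.sum_congr rfl fun i _ => ?_
              rw [Finset.sum_mul]
          _ = 0 := by simp [hsum0]
      simp only [hf, mul_add, Finset.sum_add_distrib, hz, zero_add, hC]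
    -- two shattering instances give contradictory signs for C
    obtain ⟨u₁, hu₁, hu₁B⟩ := hB (Finset.filter_subset (fun j => 0 < a j) B)
    obtain ⟨u₂, hu₂, hu₂B⟩ := hB (Finset.filter_subset (fun j => a j < 0) B)
    obtain ⟨x₁, hx₁⟩ := hmem u₁ hu₁
    obtain ⟨x₂, hx₂⟩ := hmem u₂ hu₂
    have hsign₁ : ∀ j ∈ B, (0 ≤ f j x₁ ↔ 0 < a j) := by
      intro j hj
      rw [← hx₁ j]
      constructor
      · intro hju
        have : j ∈ B ∩ u₁ := Finset.mem_inter.2 ⟨hj, hju⟩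
        rw [hu₁B] at this
        exact (Finset.mem_filter.1 this).2
      · intro haj
        have : j ∈ B ∩ u₁ := by rw [hu₁B]; exact Finset.mem_filter.2 ⟨hj, haj⟩
        exact (Finset.mem_inter.1 this).2
    have hsign₂ : ∀ j ∈ B, (0 ≤ f j x₂ ↔ a j < 0) := by
      intro j hj
      rw [← hx₂ j]
      constructor
      · intro hju
        have : j ∈ B ∩ u₂ := Finset.mem_inter.2 ⟨hj, hju⟩
        rw [hu₂B] at this
        exact (Finset.mem_filter.1 this).2
      · intro haj
        have : j ∈ B ∩ u₂ := by rw [hu₂B]; exact Finset.mem_filter.2 ⟨hj, haj⟩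
        exact (Finset.mem_inter.1 this).2
    have hterm₁ : ∀ j ∈ B, 0 ≤ a j * f j x₁ := by
      intro j hj
      rcases lt_trichotomy (a j) 0 with h | h | h
      · have hneg : f j x₁ < 0 := by
          by_contra hcon
          push_neg at hcon
          exact absurd ((hsign₁ j hj).1 hcon) (by linarith)
        exact (mul_pos_of_neg_of_neg h hneg).le
      · simp [h]
      · exact mul_nonneg h.le ((hsign₁ j hj).2 h)
    have hterm₂ : ∀ j ∈ B, a j * f j x₂ ≤ 0 := by
      intro j hj
      rcases lt_trichotomy (a j) 0 with h | h | h
      · exact mul_nonpos_of_nonpos_of_nonneg h.le ((hsign₂ j hj).2 h)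
      · simp [h]
      · have hneg : f j x₂ < 0 := by
          by_contra hcon
          push_neg at hcon
          exact absurd ((hsign₂ j hj).1 hcon) (by linarith)
        exact (mul_neg_of_pos_of_neg h hneg).le
    have hj₀B : (j₀ : Fin k) ∈ B := j₀.2
    have haj₀ : a (j₀ : Fin k) ≠ 0 := by simp [ha, j₀.2, hj₀]
    rcases haj₀.lt_or_gt with h | h
    · -- a j₀ < 0 : C > 0 from x₁, C ≤ 0 from x₂
      have hCpos : 0 < C := by
        rw [← hkey x₁]
        refine Finset.sum_pos' hterm₁ ⟨j₀, hj₀B, ?_⟩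
        have hneg : f (j₀ : Fin k) x₁ < 0 := by
          by_contra hcon
          push_neg at hcon
          exact absurd ((hsign₁ _ hj₀B).1 hcon) (by linarith)
        exact mul_pos_of_neg_of_neg h hneg
      have hCnp : C ≤ 0 := by
        rw [← hkey x₂]
        exact Finset.sum_nonpos hterm₂
      linarith
    · -- a j₀ > 0 : C ≥ 0 from x₁, C < 0 from x₂
      have hCnn : 0 ≤ C := by
        rw [← hkey x₁]
        exact Finset.sum_nonneg hterm₁
      have hCneg : C < 0 := by
        rw [← hkey x₂]
        have : ∀ j ∈ B, 0 ≤ -(a j * f j x₂) := fun j hj => by linarith [hterm₂ j hj]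
        have hpos : 0 < ∑ j ∈ B, -(a j * f j x₂) := by
          refine Finset.sum_pos' this ⟨j₀, hj₀B, ?_⟩
          have hneg : f (j₀ : Fin k) x₂ < 0 := by
            by_contra hcon
            push_neg at hcon
            exact absurd ((hsign₂ _ hj₀B).1 hcon) (by linarith)
          nlinarith
        rw [Finset.sum_neg_distrib] at hpos
        linarith
      linarith
  -- counting
  have hsub : 𝒜.shatterer ⊆ (Finset.univ : Finset (Finset (Fin k))).filter
      (fun A => A.card ≤ r) := by
    intro A hA
    rw [Finset.mem_shatterer] at hA
    simp [hshat A hA]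
  calc S.ncard = 𝒜.card := hcard
    _ ≤ 𝒜.shatterer.card := Finset.card_le_card_shatterer 𝒜
    _ ≤ _ := Finset.card_le_card hsub
    _ = ∑ i ∈ Finset.range (r + 1), k.choose i := card_filter_card_le k r
    _ = binomLe k r := by rw [binomLe, if_neg (by omega)]
end

section
/- For all integers d, k ≥ 1 and 1 ≤ r ≤ min(d,k), the VC dimension of the hyperplane arrangement classifier class HAC(d,r,k) satisfies VC(HAC(d,r,k)) ≤ 8·( k(d+1) + k(d+1)(1 + ⌈log₂ k⌉) + binom(k, ≤ r) ). -/
/-- The hyperplane arrangement classifier class `HAC(d,r,k)`: all classifiers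
`x ↦ h(sgn(Wᵀx + b))` where `W ∈ ℝ^{d×k}` has rank at most `r`, `b ∈ ℝ^k`, and
`h : {±1}^k → {±1}` is a Boolean function. -/
noncomputable def HAC (d r k : ℕ) : Set ((Fin d → ℝ) → ℝ) :=
  {f | ∃ (W : Matrix (Fin d) (Fin k) ℝ) (b : Fin k → ℝ) (h : (Fin k → ℝ) → ℝ),
    W.rank ≤ r ∧ (∀ s, h s = 1 ∨ h s = -1) ∧
    ∀ x, f x = h fun j => sgn ((∑ i, W i j * x i) + b j)}

/-- A finite set `S` is shattered by the concept class `C ⊆ {±1}^X` if every `±1`-labelling of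
`S` is realized by some `f ∈ C`. -/
def Shatters {X : Type*} (C : Set (X → ℝ)) (S : Finset X) : Prop :=
  ∀ y : X → ℝ, (∀ x ∈ S, y x = 1 ∨ y x = -1) → ∃ f ∈ C, ∀ x ∈ S, f x = y x


open Finset

/-- If all coordinates of vectors satisfying a fixed affine relation can realize every
sign pattern, we get a contradiction. -/
lemma no_all_sign_patterns {ι : Type*} [Fintype ι] (a : ι → ℝ) (c : ℝ) (ha : a ≠ 0)
    (H : ∀ ε : ι → Bool, ∃ z : ι → ℝ, (∑ i, a i * z i = c) ∧ ∀ i, (0 ≤ z i ↔ ε i = true)) :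
    False := by
  obtain ⟨zp, hzpc, hzp⟩ := H (fun i => decide (0 ≤ a i))
  obtain ⟨zm, hzmc, hzm⟩ := H (fun i => !decide (0 ≤ a i))
  simp only [decide_eq_true_eq] at hzp
  simp only [Bool.not_eq_true', decide_eq_false_iff_not] at hzm
  have hp : ∀ i, 0 ≤ a i * zp i := by
    intro i
    by_cases h : 0 ≤ a i
    · exact mul_nonneg h ((hzp i).2 h)
    · push_neg at h
      have : zp i < 0 := by
        by_contra hz
        push_neg at hz
        exact absurd ((hzp i).1 hz) (not_le.2 h)
      exact le_of_lt (mul_pos_of_neg_of_neg h this)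
  have hm : ∀ i, a i * zm i ≤ 0 := by
    intro i
    by_cases h : 0 ≤ a i
    · have : ¬ (0 ≤ zm i) := fun hz => (hzm i).1 hz h
      push_neg at this
      exact mul_nonpos_of_nonneg_of_nonpos h this.le
    · push_neg at h
      have : 0 ≤ zm i := (hzm i).2 h.not_ge
      exact mul_nonpos_of_nonpos_of_nonneg h.le this
  obtain ⟨i0, hi0⟩ : ∃ i, a i ≠ 0 := by
    by_contra hcon
    push_neg at hcon
    exact ha (funext hcon)
  rcases lt_or_gt_of_ne hi0 with hneg | hpos
  · -- a i0 < 0 : then a i0 * zp i0 > 0 so c > 0 ; but c ≤ 0 from zm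
    have h1 : 0 < ∑ i, a i * zp i := by
      refine Finset.sum_pos' (fun i _ => hp i) ⟨i0, Finset.mem_univ _, ?_⟩
      have : ¬ (0 ≤ zp i0) := fun hz => absurd ((hzp i0).1 hz) (not_le.2 hneg)
      push_neg at this
      exact mul_pos_of_neg_of_neg hneg this
    have h2 : ∑ i, a i * zm i ≤ 0 := Finset.sum_nonpos (fun i _ => hm i)
    rw [hzpc] at h1; rw [hzmc] at h2; linarith
  · -- a i0 > 0 : then a i0 * zm i0 < 0 so c < 0 ; but c ≥ 0 from zp
    have h1 : 0 ≤ ∑ i, a i * zp i := Finset.sum_nonneg (fun i _ => hp i)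
    have h2 : ∑ i, a i * zm i < 0 := by
      have hterm : a i0 * zm i0 < 0 := by
        have : ¬ (0 ≤ zm i0) := fun hz => (hzm i0).1 hz hpos.le
        push_neg at this
        exact mul_neg_of_pos_of_neg hpos this
      have := Finset.sum_lt_sum (f := fun i => a i * zm i) (g := fun _ => (0:ℝ))
        (fun i _ => hm i) ⟨i0, Finset.mem_univ _, hterm⟩
      simpa using this
    rw [hzpc] at h1; rw [hzmc] at h2; linarith

/-- More vectors than the dimension of their span yields a nontrivial linear relation. -/
lemma exists_dep {ι : Type*} [Fintype ι] {E : Type*} [AddCommGroup E] [Module ℝ E]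
    (v : ι → E) (m : ℕ) (hv : Module.finrank ℝ (Submodule.span ℝ (Set.range v)) ≤ m)
    (hcard : m < Fintype.card ι) :
    ∃ a : ι → ℝ, (∑ i, a i • v i = 0) ∧ a ≠ 0 := by
  have hni : ¬ LinearIndependent ℝ v := by
    intro hli
    have := finrank_span_eq_card hli
    omega
  obtain ⟨g, hg0, i, hi⟩ := Fintype.not_linearIndependent_iff.1 hni
  exact ⟨g, hg0, fun hcon => hi (by rw [hcon]; rfl)⟩

/-- Sauer–Shelah: a family shattering only sets of size at most `m` has few sets. -/
lemma sauer_bound {α : Type*} [Fintype α] [DecidableEq α] (𝒜 : Finset (Finset α)) (m : ℕ)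
    (h : ∀ s, 𝒜.Shatters s → s.card ≤ m) :
    𝒜.card ≤ ∑ i ∈ Finset.range (m + 1), (Fintype.card α).choose i := by
  have h1 : 𝒜.card ≤ ∑ i ∈ Finset.Iic 𝒜.vcDim, (Fintype.card α).choose i :=
    (Finset.card_le_card_shatterer 𝒜).trans Finset.card_shatterer_le_sum_vcDim
  have h2 : 𝒜.vcDim ≤ m := by
    refine Finset.sup_le fun s hs => h s (Finset.mem_shatterer.1 hs)
  calc 𝒜.card ≤ ∑ i ∈ Finset.Iic 𝒜.vcDim, (Fintype.card α).choose i := h1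
    _ ≤ ∑ i ∈ Finset.Iic m, (Fintype.card α).choose i :=
        Finset.sum_le_sum_of_subset (Finset.Iic_subset_Iic.2 h2)
    _ = ∑ i ∈ Finset.range (m + 1), (Fintype.card α).choose i := by
        have : Finset.Iic m = Finset.range (m + 1) := by
          ext x; simp [Nat.lt_succ_iff]
        rw [this]

/-- Core: if a nontrivial relation `∑ a j • (evaluations) = c` holds for all realizing
parameters, the family cannot shatter `s`. -/
lemma not_shatters_of_dep {γ : Type*} [DecidableEq γ] {𝒜 : Finset (Finset γ)} {s : Finset γ}
    (a : {x // x ∈ s} → ℝ) (ha : a ≠ 0) (c : ℝ)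
    (hreal : ∀ u ∈ 𝒜, ∃ z : {x // x ∈ s} → ℝ,
      (∑ j, a j * z j = c) ∧ ∀ j : {x // x ∈ s}, ((j : γ) ∈ u ↔ 0 ≤ z j)) :
    ¬ 𝒜.Shatters s := by
  intro hs
  refine no_all_sign_patterns a c ha fun ε => ?_
  classical
  set t : Finset γ := s.filter (fun x => ∃ h : x ∈ s, ε ⟨x, h⟩ = true) with ht
  have hts : t ⊆ s := Finset.filter_subset _ _
  obtain ⟨u, hu, hsu⟩ := hs hts
  obtain ⟨z, hzc, hz⟩ := hreal u hu
  have hmem : ∀ j : {x // x ∈ s}, ((j : γ) ∈ t ↔ ε j = true) := by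
    intro j
    simp only [ht, Finset.mem_filter]
    constructor
    · rintro ⟨-, h', hε⟩
      rwa [Subtype.coe_eta] at hε
    · intro hε
      exact ⟨j.2, j.2, by rwa [Subtype.coe_eta]⟩
  refine ⟨z, hzc, fun j => ?_⟩
  rw [← hz j, ← hmem j, ← hsu, Finset.mem_inter, and_iff_right j.2]

/-- Halfspaces in `ℝ^d` shatter no set of more than `d+1` points. -/
lemma halfspace_no_shatter {d : ℕ} {γ : Type*} [DecidableEq γ] (p : γ → Fin d → ℝ)
    (𝒜 : Finset (Finset γ))
    (h𝒜 : ∀ u ∈ 𝒜, ∃ (w : Fin d → ℝ) (b : ℝ),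
      ∀ x, x ∈ u ↔ 0 ≤ (∑ i, w i * p x i) + b)
    {s : Finset γ} (hs : 𝒜.Shatters s) : s.card ≤ d + 1 := by
  by_contra hcard
  push_neg at hcard
  classical
  set ι := {x // x ∈ s}
  have hcι : d + 1 < Fintype.card ι := by
    rwa [Fintype.card_coe]
  set v : ι → (Fin d → ℝ) × ℝ := fun x => (p x, 1) with hv
  have hspan : Module.finrank ℝ (Submodule.span ℝ (Set.range v)) ≤ d + 1 := by
    have h1 : Module.finrank ℝ (Submodule.span ℝ (Set.range v)) ≤
        Module.finrank ℝ ((Fin d → ℝ) × ℝ) := Submodule.finrank_le _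
    have h2 : Module.finrank ℝ ((Fin d → ℝ) × ℝ) = d + 1 := by
      simp [Module.finrank_prod]
    omega
  obtain ⟨a, hdep, ha⟩ := exists_dep v (d + 1) hspan hcι
  have hfst : ∀ i : Fin d, ∑ j, a j * p (j : γ) i = 0 := by
    intro i
    have := congrArg (fun q => q.1 i) hdep
    simpa [Finset.sum_apply, Prod.fst_sum] using this
  have hsnd : ∑ j : ι, a j = 0 := by
    have := congrArg Prod.snd hdep
    simpa [Prod.snd_sum, hv] using this
  refine not_shatters_of_dep a ha 0 ?_ hs
  intro u hu
  obtain ⟨w, b, hwb⟩ := h𝒜 u hu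
  refine ⟨fun j => (∑ i, w i * p (j : γ) i) + b, ?_, fun j => hwb _⟩
  calc ∑ j : ι, a j * ((∑ i, w i * p (j : γ) i) + b)
      = ∑ j : ι, ((∑ i, w i * (a j * p (j : γ) i)) + a j * b) := by
        refine Finset.sum_congr rfl fun j _ => ?_
        rw [mul_add, Finset.mul_sum]
        congr 1
        exact Finset.sum_congr rfl fun i _ => by ring
    _ = (∑ j : ι, ∑ i, w i * (a j * p (j : γ) i)) + ∑ j : ι, a j * b :=
        Finset.sum_add_distrib
    _ = (∑ i, ∑ j : ι, w i * (a j * p (j : γ) i)) + (∑ j : ι, a j) * b := by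
        rw [Finset.sum_comm, Finset.sum_mul]
    _ = (∑ i, w i * (∑ j : ι, a j * p (j : γ) i)) + (∑ j : ι, a j) * b := by
        congr 1
        exact Finset.sum_congr rfl fun i _ => by rw [Finset.mul_sum]
    _ = 0 := by rw [hsnd]; simp [hfst]

/-- Sign patterns of an affine map with rank-`r` linear part shatter no set of
more than `r` coordinates. -/
lemma pattern_no_shatter {d k r : ℕ} (W : Matrix (Fin d) (Fin k) ℝ) (b : Fin k → ℝ)
    (hW : W.rank ≤ r)
    (Pf : Finset (Finset (Fin k)))
    (hPf : ∀ u ∈ Pf, ∃ x : Fin d → ℝ, ∀ j, j ∈ u ↔ 0 ≤ (∑ i, W i j * x i) + b j)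
    {s : Finset (Fin k)} (hs : Pf.Shatters s) : s.card ≤ r := by
  by_contra hcard
  push_neg at hcard
  classical
  set ι := {x // x ∈ s}
  have hcι : r < Fintype.card ι := by rwa [Fintype.card_coe]
  set v : ι → (Fin d → ℝ) := fun j => W.transpose (j : Fin k) with hv
  have hspan : Module.finrank ℝ (Submodule.span ℝ (Set.range v)) ≤ r := by
    have hsub : Submodule.span ℝ (Set.range v) ≤ Submodule.span ℝ (Set.range W.transpose) := by
      refine Submodule.span_mono ?_
      rintro - ⟨j, rfl⟩
      exact ⟨(j : Fin k), rfl⟩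
    have := Submodule.finrank_mono hsub
    rw [show Set.range W.transpose = Set.range W.col from rfl, ← Matrix.rank_eq_finrank_span_cols] at this
    omega
  obtain ⟨a, hdep, ha⟩ := exists_dep v r hspan hcι
  have hcols : ∀ i : Fin d, ∑ j : ι, a j * W i (j : Fin k) = 0 := by
    intro i
    have := congrArg (fun q => q i) hdep
    simpa [Finset.sum_apply, Matrix.transpose_apply, hv] using this
  refine not_shatters_of_dep a ha (∑ j : ι, a j * b (j : Fin k)) ?_ hs
  intro u hu
  obtain ⟨x, hx⟩ := hPf u hu
  refine ⟨fun j => (∑ i, W i (j : Fin k) * x i) + b (j : Fin k), ?_, fun j => hx _⟩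
  calc ∑ j : ι, a j * ((∑ i, W i (j : Fin k) * x i) + b (j : Fin k))
      = ∑ j : ι, ((∑ i, x i * (a j * W i (j : Fin k))) + a j * b (j : Fin k)) := by
        refine Finset.sum_congr rfl fun j _ => ?_
        rw [mul_add, Finset.mul_sum]
        congr 1
        exact Finset.sum_congr rfl fun i _ => by ring
    _ = (∑ j : ι, ∑ i, x i * (a j * W i (j : Fin k))) + ∑ j : ι, a j * b (j : Fin k) :=
        Finset.sum_add_distrib
    _ = (∑ i, x i * (∑ j : ι, a j * W i (j : Fin k))) + ∑ j : ι, a j * b (j : Fin k) := by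
        rw [Finset.sum_comm]
        congr 1
        exact Finset.sum_congr rfl fun i _ => by rw [Finset.mul_sum]
    _ = ∑ j : ι, a j * b (j : Fin k) := by simp [hcols]

/-- Bound on partial sums of binomial coefficients. -/
lemma sum_choose_le_real (m n : ℕ) (hm : 1 ≤ m) (hmn : m ≤ n) :
    ((∑ i ∈ Finset.range (m + 1), n.choose i : ℕ) : ℝ) ≤
      Real.exp m * ((n : ℝ) / m) ^ m := by
  have hm0 : (0:ℝ) < m := by positivity
  have hn0 : (0:ℝ) < n := by
    have : (0:ℕ) < n := lt_of_lt_of_le hm hmn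
    exact_mod_cast this
  set x : ℝ := (m : ℝ) / n with hx
  have hx0 : 0 < x := by positivity
  have hx1 : x ≤ 1 := by
    rw [hx, div_le_one hn0]
    exact_mod_cast hmn
  have key : ((∑ i ∈ Finset.range (m + 1), n.choose i : ℕ) : ℝ) * x ^ m ≤ Real.exp m := by
    calc ((∑ i ∈ Finset.range (m + 1), n.choose i : ℕ) : ℝ) * x ^ m
        = ∑ i ∈ Finset.range (m + 1), (n.choose i : ℝ) * x ^ m := by
          push_cast; rw [Finset.sum_mul]
      _ ≤ ∑ i ∈ Finset.range (m + 1), (n.choose i : ℝ) * x ^ i := by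
          refine Finset.sum_le_sum fun i hi => ?_
          have him : i ≤ m := Nat.lt_succ_iff.1 (Finset.mem_range.1 hi)
          exact mul_le_mul_of_nonneg_left
            (pow_le_pow_of_le_one hx0.le hx1 him) (by positivity)
      _ ≤ ∑ i ∈ Finset.range (n + 1), (n.choose i : ℝ) * x ^ i := by
          refine Finset.sum_le_sum_of_subset_of_nonneg
            (Finset.range_subset_range.2 (by omega)) fun i _ _ => by positivity
      _ = (x + 1) ^ n := by
          rw [add_pow]
          refine Finset.sum_congr rfl fun i hi => ?_
          ring
      _ ≤ Real.exp x ^ n := by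
          refine pow_le_pow_left₀ (by positivity) ?_ n
          linarith [Real.add_one_le_exp x]
      _ = Real.exp ((n : ℝ) * x) := (Real.exp_nat_mul x n).symm
      _ = Real.exp m := by
          congr 1
          rw [hx]; field_simp
  have hxm : 0 < x ^ m := by positivity
  rw [← le_div_iff₀ hxm] at key
  calc ((∑ i ∈ Finset.range (m + 1), n.choose i : ℕ) : ℝ)
      ≤ Real.exp m / x ^ m := key
    _ = Real.exp m * ((n : ℝ) / m) ^ m := by
        rw [div_eq_mul_inv, ← inv_pow, hx]
        congr 2
        field_simp

/-- `log x ≤ x / C + log C`. -/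
lemma log_le_div_add_log {x C : ℝ} (hx : 0 < x) (hC : 0 < C) :
    Real.log x ≤ x / C + Real.log C := by
  have h := Real.log_le_sub_one_of_pos (show 0 < x / C by positivity)
  rw [Real.log_div hx.ne' hC.ne'] at h
  linarith

set_option maxHeartbeats 1000000 in
/-- The final arithmetic step. -/
lemma arith_bound (d k n L C : ℕ) (hd : 1 ≤ d) (hk : 1 ≤ k) (hL : 1 ≤ L)
    (hkC : k ≤ 2 ^ C)
    (hcount : (2:ℕ) ^ n ≤ (∑ i ∈ Finset.range (d + 2), n.choose i) ^ k * 2 ^ L) :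
    n ≤ 8 * (k * (d + 1) + k * (d + 1) * (1 + C) + L) := by
  have hkd : d + 1 ≤ k * (d + 1) := Nat.le_mul_of_pos_left _ hk
  by_cases hn : n ≤ d + 1
  · omega
  push_neg at hn
  have hdn : d + 1 ≤ n := hn.le
  set M : ℕ := ∑ i ∈ Finset.range (d + 2), n.choose i with hM
  have hM1 : 1 ≤ M := by
    calc 1 = n.choose 0 := (Nat.choose_zero_right n).symm
      _ ≤ M := Finset.single_le_sum (f := fun i => n.choose i)
          (fun i _ => Nat.zero_le _) (Finset.mem_range.2 (by omega))
  have hM0 : (0:ℝ) < (M:ℝ) := by exact_mod_cast hM1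
  -- pass to logs
  have hcast : (2:ℝ) ^ n ≤ (M:ℝ) ^ k * 2 ^ L := by exact_mod_cast hcount
  have hlog : (n:ℝ) * Real.log 2 ≤ k * Real.log M + L * Real.log 2 := by
    have h := Real.log_le_log (by positivity) hcast
    rw [Real.log_pow, Real.log_mul (by positivity) (by positivity),
      Real.log_pow, Real.log_pow] at h
    exact_mod_cast h
  -- bound log M
  set m : ℕ := d + 1 with hm
  have hm0 : (0:ℝ) < (m:ℝ) := by positivity
  have hMle : (M:ℝ) ≤ Real.exp m * ((n:ℝ)/m) ^ m := by
    have := sum_choose_le_real m n (by omega) hdn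
    simpa [hM] using this
  have hn0R : (0:ℝ) < (n:ℝ) := by
    have : 0 < n := by omega
    exact_mod_cast this
  have hq0 : (0:ℝ) < (n:ℝ)/m := div_pos hn0R hm0
  have hlogM : Real.log M ≤ (m:ℝ) * (1 + Real.log ((n:ℝ)/m)) := by
    calc Real.log M ≤ Real.log (Real.exp m * ((n:ℝ)/m) ^ m) :=
          Real.log_le_log hM0 hMle
      _ = (m:ℝ) + (m:ℝ) * Real.log ((n:ℝ)/m) := by
          rw [Real.log_mul (Real.exp_pos _).ne' (by positivity), Real.log_exp,
            Real.log_pow]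
      _ = (m:ℝ) * (1 + Real.log ((n:ℝ)/m)) := by ring
  -- bound log (n/m)
  have hk0 : (0:ℝ) < (k:ℝ) := by positivity
  have hlq : Real.log ((n:ℝ)/m) ≤ (n:ℝ)/((m:ℝ)*(8*k)) + Real.log (8*k) := by
    have := log_le_div_add_log hq0 (show (0:ℝ) < 8*(k:ℝ) by positivity)
    calc Real.log ((n:ℝ)/m) ≤ ((n:ℝ)/m)/(8*k) + Real.log (8*k) := this
      _ = (n:ℝ)/((m:ℝ)*(8*k)) + Real.log (8*k) := by rw [div_div]
  have hlog2le : Real.log 2 ≤ 1 := by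
    linarith [Real.log_le_sub_one_of_pos (show (0:ℝ) < 2 by norm_num)]
  have hlog2ge : (1:ℝ)/2 < Real.log 2 := by
    have := Real.log_two_gt_d9
    linarith
  have hl8k : Real.log (8*(k:ℝ)) ≤ (C:ℝ) + 3 := by
    have h8k : (8:ℝ)*(k:ℝ) ≤ 2 ^ (C + 3) := by
      have : (k:ℝ) ≤ 2 ^ C := by exact_mod_cast hkC
      rw [pow_add]
      norm_num
      linarith
    calc Real.log (8*(k:ℝ)) ≤ Real.log (2 ^ (C + 3)) :=
          Real.log_le_log (by positivity) h8k
      _ = ((C:ℝ) + 3) * Real.log 2 := by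
          rw [Real.log_pow]; push_cast; ring
      _ ≤ (C:ℝ) + 3 := by
          have h0 : (0:ℝ) ≤ (C:ℝ) + 3 := by positivity
          nlinarith
  -- combine
  have hcomb : (k:ℝ) * Real.log M ≤
      (k:ℝ) * ((m:ℝ) * (1 + ((n:ℝ)/((m:ℝ)*(8*k)) + ((C:ℝ) + 3)))) := by
    refine (mul_le_mul_of_nonneg_left hlogM (by positivity)).trans ?_
    refine mul_le_mul_of_nonneg_left ?_ (by positivity)
    refine mul_le_mul_of_nonneg_left ?_ (by positivity)
    linarith
  have hident : (k:ℝ) * ((m:ℝ) * (1 + ((n:ℝ)/((m:ℝ)*(8*k)) + ((C:ℝ) + 3))))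
      = (k:ℝ)*(m:ℝ)*((C:ℝ) + 4) + (n:ℝ)/8 := by
    field_simp
    ring
  rw [hident] at hcomb
  have hfin : (n:ℝ)/2 ≤ (k:ℝ)*(m:ℝ)*((C:ℝ)+4) + (n:ℝ)/8 + (L:ℝ) := by
    have h1 : (n:ℝ)*(1/2) ≤ (n:ℝ)*Real.log 2 :=
      mul_le_mul_of_nonneg_left hlog2ge.le (by positivity)
    have h2 : (L:ℝ)*Real.log 2 ≤ (L:ℝ) := by
      nlinarith [Nat.cast_nonneg (α := ℝ) L]
    nlinarith
  -- conclude
  have goalR : (n:ℝ) ≤ 8 * ((k:ℝ)*(m:ℝ) + (k:ℝ)*(m:ℝ)*(1+(C:ℝ)) + (L:ℝ)) := by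
    nlinarith [mul_nonneg (mul_nonneg hk0.le hm0.le) (Nat.cast_nonneg (α := ℝ) C),
      mul_nonneg hk0.le hm0.le, Nat.cast_nonneg (α := ℝ) L]
  have goalR' : (n:ℝ) ≤ ((8 * (k * (d + 1) + k * (d + 1) * (1 + C) + L) : ℕ) : ℝ) := by
    push_cast
    calc (n:ℝ) ≤ 8 * ((k:ℝ)*(m:ℝ) + (k:ℝ)*(m:ℝ)*(1+(C:ℝ)) + (L:ℝ)) := goalR
      _ = 8 * ((k:ℝ) * ((d:ℝ)+1) + (k:ℝ)*((d:ℝ)+1)*(1+(C:ℝ)) + (L:ℝ)) := by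
          rw [hm]; push_cast; ring
  exact_mod_cast goalR'

set_option maxHeartbeats 2000000 in
/-- `VC(HAC(d,r,k)) ≤ 8·(k(d+1) + k(d+1)(1 + ⌈log₂ k⌉) + binom(k, ≤ r))`: every finite set
shattered by `HAC(d,r,k)` has cardinality at most this bound. -/
theorem vc_dim_HAC_le (d r k : ℕ) (hd : 1 ≤ d) (hk : 1 ≤ k)
    (hr : 1 ≤ r) (hrd : r ≤ d) (hrk : r ≤ k)
    (S : Finset (Fin d → ℝ)) (hS : Shatters (HAC d r k) S) :
    S.card ≤ 8 * (k * (d + 1) + k * (d + 1) * (1 + Nat.clog 2 k) + binomLe k r) := by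
  classical
  -- the Boolean-combination size bound
  set L : ℕ := binomLe k r with hLd
  have hLdef : L = ∑ i ∈ Finset.range (r + 1), k.choose i := by
    rw [hLd, binomLe, if_neg (not_lt.2 hrk)]
  have hL1 : 1 ≤ L := by
    rw [hLdef]
    calc 1 = k.choose 0 := (Nat.choose_zero_right k).symm
      _ ≤ _ := Finset.single_le_sum (f := fun i => k.choose i)
          (fun i _ => Nat.zero_le _) (Finset.mem_range.2 (by omega))
  -- choose witnesses for every Boolean labelling of S
  have key : ∀ y : {x // x ∈ S} → Bool, ∃ (W : Matrix (Fin d) (Fin k) ℝ)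
      (B : Fin k → ℝ) (G : (Fin k → ℝ) → ℝ), W.rank ≤ r ∧ (∀ s, G s = 1 ∨ G s = -1) ∧
      ∀ x : {x // x ∈ S}, G (fun j => sgn ((∑ i, W i j * (x : Fin d → ℝ) i) + B j))
        = (if y x then (1:ℝ) else -1) := by
    intro y
    set yr : (Fin d → ℝ) → ℝ :=
      fun x => if hx : x ∈ S then (if y ⟨x, hx⟩ then 1 else -1) else 1 with hyrd
    have hyr : ∀ x ∈ S, yr x = 1 ∨ yr x = -1 := by
      intro x hx
      simp only [hyrd, dif_pos hx]
      split <;> simp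
    obtain ⟨f, hf, hfy⟩ := hS yr hyr
    obtain ⟨W, B, G, hrank, hpm, hfx⟩ := hf
    refine ⟨W, B, G, hrank, hpm, fun x => ?_⟩
    have h2 := hfy (x : Fin d → ℝ) x.2
    rw [hfx (x : Fin d → ℝ)] at h2
    rw [h2]
    simp only [hyrd, dif_pos x.2, Subtype.coe_eta]
  choose W B G hrank hpm hval using key
  -- the sign-pattern map and Boolean post-processing
  set σ : ({x // x ∈ S} → Bool) → {x // x ∈ S} → Fin k → Bool :=
    fun y x j => decide (0 ≤ (∑ i, W y i j * (x : Fin d → ℝ) i) + B y j) with hσd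
  set τ : ({x // x ∈ S} → Bool) → (Fin k → Bool) → Bool :=
    fun y s => decide (G y (fun j => if s j then (1:ℝ) else -1) = 1) with hτd
  have hrecon : ∀ y x, y x = τ y (σ y x) := by
    intro y x
    have hsgn : (fun j => sgn ((∑ i, W y i j * (x : Fin d → ℝ) i) + B y j))
        = fun j => if σ y x j then (1:ℝ) else -1 := by
      funext j
      simp only [sgn, hσd]
      by_cases hc : 0 ≤ (∑ i, W y i j * (x : Fin d → ℝ) i) + B y j <;> simp [hc]
    have hv := hval y x
    rw [hsgn] at hv
    by_cases hy : y x = true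
    · rw [hy]
      rw [if_pos hy] at hv
      simp [hτd, hv]
    · simp only [Bool.not_eq_true] at hy
      rw [hy]
      rw [if_neg (by simp [hy])] at hv
      simp only [hτd, hv]
      norm_num
  -- each pattern map has a small image (rank condition + Sauer-Shelah)
  have hIm : ∀ y, (Finset.univ.image (σ y)).card ≤ L := by
    intro y
    set Pf : Finset (Finset (Fin k)) := (Finset.univ.image (σ y)).image
      (fun s => Finset.univ.filter (fun j => s j = true)) with hPfd
    have hinj : Set.InjOn (fun s : Fin k → Bool => Finset.univ.filter (fun j => s j = true))
        ((Finset.univ.image (σ y)) : Set (Fin k → Bool)) := by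
      intro s1 _ s2 _ h12
      funext j
      have hj := Finset.ext_iff.1 h12 j
      simp only [Finset.mem_filter, Finset.mem_univ, true_and] at hj
      cases h1 : s1 j <;> cases h2 : s2 j <;> simp_all
    have hcardeq : (Finset.univ.image (σ y)).card = Pf.card :=
      (Finset.card_image_of_injOn hinj).symm
    have hreal : ∀ u ∈ Pf, ∃ x : Fin d → ℝ,
        ∀ j, j ∈ u ↔ 0 ≤ (∑ i, W y i j * x i) + B y j := by
      intro u hu
      rw [hPfd] at hu
      obtain ⟨s, hs, rfl⟩ := Finset.mem_image.1 hu
      obtain ⟨x, -, rfl⟩ := Finset.mem_image.1 hs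
      refine ⟨(x : Fin d → ℝ), fun j => ?_⟩
      simp only [Finset.mem_filter, Finset.mem_univ, true_and, hσd, decide_eq_true_eq]
    have hsau := sauer_bound Pf r
      (fun s hs => pattern_no_shatter (W y) (B y) (hrank y) Pf hreal hs)
    rw [hcardeq, hLdef]
    simpa [Fintype.card_fin] using hsau
  -- the family of halfspace dichotomies of S
  set Hfam : Finset ({x // x ∈ S} → Bool) := Finset.univ.filter
    (fun g => ∃ (w : Fin d → ℝ) (c : ℝ),
      ∀ x : {x // x ∈ S}, g x = true ↔ 0 ≤ (∑ i, w i * (x : Fin d → ℝ) i) + c) with hHd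
  have hHcard : Hfam.card ≤ ∑ i ∈ Finset.range (d + 2), S.card.choose i := by
    set Af : Finset (Finset {x // x ∈ S}) :=
      Hfam.image (fun g => Finset.univ.filter (fun x => g x = true)) with hAfd
    have hinj : Set.InjOn (fun g : {x // x ∈ S} → Bool =>
        Finset.univ.filter (fun x => g x = true)) (Hfam : Set ({x // x ∈ S} → Bool)) := by
      intro g1 _ g2 _ h12
      funext x
      have hx := Finset.ext_iff.1 h12 x
      simp only [Finset.mem_filter, Finset.mem_univ, true_and] at hx
      cases h1 : g1 x <;> cases h2 : g2 x <;> simp_all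
    have hcardeq : Hfam.card = Af.card := (Finset.card_image_of_injOn hinj).symm
    have hreal : ∀ u ∈ Af, ∃ (w : Fin d → ℝ) (c : ℝ),
        ∀ x : {x // x ∈ S}, x ∈ u ↔ 0 ≤ (∑ i, w i * (x : Fin d → ℝ) i) + c := by
      intro u hu
      rw [hAfd] at hu
      obtain ⟨g, hg, rfl⟩ := Finset.mem_image.1 hu
      rw [hHd, Finset.mem_filter] at hg
      obtain ⟨-, w, c, hwc⟩ := hg
      refine ⟨w, c, fun x => ?_⟩
      simp only [Finset.mem_filter, Finset.mem_univ, true_and]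
      exact hwc x
    have hsau := sauer_bound Af (d + 1)
      (fun s hs => halfspace_no_shatter (fun x : {x // x ∈ S} => (x : Fin d → ℝ))
        Af hreal hs)
    rw [hcardeq]
    have : d + 1 + 1 = d + 2 := rfl
    simpa [Fintype.card_coe, this] using hsau
  -- the set of realized pattern maps
  set Sig1 : Finset ({x // x ∈ S} → Fin k → Bool) := Finset.univ.image σ with hSigd
  have hSigcard : Sig1.card ≤ Hfam.card ^ k := by
    have h1 : Sig1.card ≤ (Fintype.piFinset (fun _ : Fin k => Hfam)).card := by
      refine Finset.card_le_card_of_injOn (fun σ0 => fun j x => σ0 x j) ?_ ?_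
      · intro σ0 hσ0
        rw [hSigd] at hσ0
        obtain ⟨y, -, rfl⟩ := Finset.mem_image.1 hσ0
        rw [Finset.mem_coe, Fintype.mem_piFinset]
        intro j
        rw [hHd, Finset.mem_filter]
        refine ⟨Finset.mem_univ _, fun i => W y i j, B y j, fun x => ?_⟩
        simp only [hσd, decide_eq_true_eq]
      · intro σ1 _ σ2 _ h12
        funext x j
        exact congrFun (congrFun h12 j) x
    have h2 : (Fintype.piFinset (fun _ : Fin k => Hfam)).card = Hfam.card ^ k := by
      rw [Fintype.card_piFinset]
      simp
    omega
  -- the compressed encoding of labellings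
  set T : ({x // x ∈ S} → Bool) → Finset (Fin k → Bool) :=
    fun y => (Finset.univ.image (σ y)).filter (fun s => τ y s = true) with hTd
  set D : Finset (({x // x ∈ S} → Fin k → Bool) × Finset (Fin k → Bool)) :=
    Sig1.biUnion (fun σ0 => ((Finset.univ.image σ0).powerset).image (fun t => (σ0, t)))
    with hDd
  have hmapsto : ∀ y, (σ y, T y) ∈ D := by
    intro y
    rw [hDd]
    refine Finset.mem_biUnion.2 ⟨σ y, ?_, ?_⟩
    · rw [hSigd]; exact Finset.mem_image_of_mem σ (Finset.mem_univ y)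
    · refine Finset.mem_image.2 ⟨T y, ?_, rfl⟩
      rw [Finset.mem_powerset, hTd]
      exact Finset.filter_subset _ _
  have hcardY : 2 ^ S.card ≤ D.card := by
    have hinjΦ : Set.InjOn (fun y : {x // x ∈ S} → Bool => (σ y, T y))
        ((Finset.univ : Finset ({x // x ∈ S} → Bool)) : Set _) := by
      intro y1 _ y2 _ h12
      have hσe : σ y1 = σ y2 := congrArg Prod.fst h12
      have hTe : T y1 = T y2 := congrArg Prod.snd h12
      funext x
      have e1 : y1 x = true ↔ σ y1 x ∈ T y1 := by
        rw [hTd]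
        simp only [Finset.mem_filter]
        constructor
        · intro h
          exact ⟨Finset.mem_image_of_mem _ (Finset.mem_univ x), by rw [← hrecon y1 x, h]⟩
        · intro h
          rw [hrecon y1 x]
          exact h.2
      have e2 : y2 x = true ↔ σ y2 x ∈ T y2 := by
        rw [hTd]
        simp only [Finset.mem_filter]
        constructor
        · intro h
          exact ⟨Finset.mem_image_of_mem _ (Finset.mem_univ x), by rw [← hrecon y2 x, h]⟩
        · intro h
          rw [hrecon y2 x]
          exact h.2
      rw [hσe, hTe] at e1
      have := e1.trans e2.symm
      cases h1 : y1 x <;> cases h2 : y2 x <;> simp_all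
    have hle := Finset.card_le_card_of_injOn (fun y => (σ y, T y))
      (fun y _ => hmapsto y) hinjΦ
    calc 2 ^ S.card = Fintype.card ({x // x ∈ S} → Bool) := by
          rw [Fintype.card_fun]
          simp [Fintype.card_coe]
      _ = (Finset.univ : Finset ({x // x ∈ S} → Bool)).card := (Finset.card_univ).symm
      _ ≤ D.card := hle
  have hDcard : D.card ≤ Sig1.card * 2 ^ L := by
    rw [hDd]
    calc (Sig1.biUnion fun σ0 =>
          ((Finset.univ.image σ0).powerset).image (fun t => (σ0, t))).card
        ≤ ∑ σ0 ∈ Sig1, (((Finset.univ.image σ0).powerset).image (fun t => (σ0, t))).card :=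
          Finset.card_biUnion_le
      _ ≤ ∑ _σ0 ∈ Sig1, 2 ^ L := by
          refine Finset.sum_le_sum fun σ0 hσ0 => ?_
          refine Finset.card_image_le.trans ?_
          rw [Finset.card_powerset]
          refine Nat.pow_le_pow_right (by norm_num) ?_
          rw [hSigd] at hσ0
          obtain ⟨y, -, rfl⟩ := Finset.mem_image.1 hσ0
          exact hIm y
      _ = Sig1.card * 2 ^ L := by rw [Finset.sum_const, smul_eq_mul]
  -- put the counting together and finish with arithmetic
  have hcount : (2:ℕ) ^ S.card ≤
      (∑ i ∈ Finset.range (d + 2), S.card.choose i) ^ k * 2 ^ L := by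
    calc (2:ℕ) ^ S.card ≤ D.card := hcardY
      _ ≤ Sig1.card * 2 ^ L := hDcard
      _ ≤ Hfam.card ^ k * 2 ^ L := Nat.mul_le_mul_right _ hSigcard
      _ ≤ (∑ i ∈ Finset.range (d + 2), S.card.choose i) ^ k * 2 ^ L :=
          Nat.mul_le_mul_right _ (Nat.pow_le_pow_left hHcard k)
  exact arith_bound d k S.card L (Nat.clog 2 k) hd hk hL1
    (Nat.le_pow_clog (by norm_num) k) hcount
end

section
/- Let d, k ≥ 1 and 1 ≤ r ≤ min(d,k) be integers, and let {(x_i, y_i)}_{i∈[n]} ⊆ ℝ^d × {±1} be a finite sequence labelled consistently by some element of HAC(d,r,k), i.e., there exists f ∈ HAC(d,r,k) with f(x_i) = y_i for all i ∈ [n]. Then there exist a matrix V = [v₁ ⋯ v_k] ∈ ℝ^{d×k}, a vector c = (c₁,…,c_k) ∈ ℝ^k, and a Boolean function h: {±1}^k → {±1} such that: (1) y_i = h(sgn(Vᵀx_i + c)) for all i ∈ [n]; (2) rank(V) ≤ r; and (3) |v_jᵀx_i + c_j| ≥ 1 for all i ∈ [n] and j ∈ [k]. -/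
/-- Canonical form: any `HAC(d,r,k)`-labelled sequence `{(xᵢ,yᵢ)}` can be labelled by a
hyperplane arrangement classifier `h ∘ sgn(Vᵀ· + c)` with `rank(V) ≤ r` such that every
sample point has margin `|vⱼᵀxᵢ + cⱼ| ≥ 1` from every hyperplane. -/
theorem HAC_canonical_form (d r k n : ℕ) (hd : 1 ≤ d) (hk : 1 ≤ k)
    (hr : 1 ≤ r) (hrd : r ≤ d) (hrk : r ≤ k)
    (x : Fin n → Fin d → ℝ) (y : Fin n → ℝ)
    (hlab : ∃ f ∈ HAC d r k, ∀ i, f (x i) = y i) :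
    ∃ (V : Matrix (Fin d) (Fin k) ℝ) (c : Fin k → ℝ) (h : (Fin k → ℝ) → ℝ),
      (∀ s, h s = 1 ∨ h s = -1) ∧
      (∀ i, y i = h fun j => sgn ((∑ l, V l j * x i l) + c j)) ∧
      V.rank ≤ r ∧
      (∀ i j, 1 ≤ |(∑ l, V l j * x i l) + c j|) := by
  obtain ⟨f, ⟨W, b, h, hWr, hb, hf⟩, hfy⟩ := hlab
  set t : Fin k → Fin n → ℝ := fun j i => (∑ l, W l j * x i l) + b j with ht
  clear_value t
  -- choose a shift ε j > 0 preserving the negative signs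
  have hεex : ∀ j : Fin k, ∃ ε : ℝ, 0 < ε ∧ ∀ i, t j i < 0 → t j i + ε < 0 := by
    intro j
    set s := insert 1 (Finset.univ.image fun i => if t j i < 0 then -(t j i) / 2 else 1)
      with hs
    have hne : s.Nonempty := ⟨1, Finset.mem_insert_self _ _⟩
    refine ⟨s.min' hne, ?_, ?_⟩
    · rw [Finset.lt_min'_iff]
      intro a ha
      rcases Finset.mem_insert.mp ha with rfl | ha
      · norm_num
      · obtain ⟨i, _, rfl⟩ := Finset.mem_image.mp ha
        split <;> [linarith; norm_num]
    · intro i hti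
      have hmem : (if t j i < 0 then -(t j i) / 2 else 1) ∈ s :=
        Finset.mem_insert_of_mem (Finset.mem_image_of_mem _ (Finset.mem_univ i))
      have := Finset.min'_le s _ hmem
      simp only [if_pos hti] at this
      linarith
  choose ε hεpos hεneg using hεex
  -- the shifted values are nonzero and preserve signs
  have htne : ∀ j i, t j i + ε j ≠ 0 := by
    intro j i
    rcases lt_or_ge (t j i) 0 with hlt | hle
    · exact ne_of_lt (hεneg j i hlt)
    · have := hεpos j; positivity
  -- choose scale M j ≥ 1/|t j i + ε j|
  have hMex : ∀ j : Fin k, ∃ M : ℝ, 0 < M ∧ ∀ i, 1 / |t j i + ε j| ≤ M := by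
    intro j
    set s := insert 1 (Finset.univ.image fun i => 1 / |t j i + ε j|) with hs
    have hne : s.Nonempty := ⟨1, Finset.mem_insert_self _ _⟩
    refine ⟨s.max' hne, ?_, ?_⟩
    · have := Finset.le_max' s 1 (Finset.mem_insert_self _ _); linarith
    · intro i
      exact Finset.le_max' s _
        (Finset.mem_insert_of_mem (Finset.mem_image_of_mem _ (Finset.mem_univ i)))
  choose M hMpos hMle using hMex
  refine ⟨fun l j => M j * W l j, fun j => M j * (b j + ε j), h, hb, ?_, ?_, ?_⟩
  -- key computation
  · have key : ∀ i j, (∑ l, (M j * W l j) * x i l) + M j * (b j + ε j)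
        = M j * (t j i + ε j) := by
      intro i j
      simp only [ht]
      simp only [mul_assoc, ← Finset.mul_sum]
      ring
    intro i
    rw [← hfy i, hf (x i)]
    congr 1
    funext j
    rw [key i j]
    unfold sgn
    rw [show (∑ l, W l j * x i l) + b j = t j i by rw [ht]]
    rcases lt_or_ge (t j i) 0 with hlt | hle
    · have h1 : ¬ (0 ≤ t j i) := not_le.mpr hlt
      have h2 : M j * (t j i + ε j) < 0 :=
        mul_neg_of_pos_of_neg (hMpos j) (hεneg j i hlt)
      rw [if_neg h1, if_neg (not_le.mpr h2)]
    · have h2 : 0 < M j * (t j i + ε j) := by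
        have := hεpos j; have := hMpos j; positivity
      rw [if_pos hle, if_pos h2.le]
  -- rank
  · have hV : (fun l j => M j * W l j : Matrix (Fin d) (Fin k) ℝ)
        = W * Matrix.diagonal M := by
      ext l j
      simp [Matrix.mul_apply, Matrix.diagonal_apply, Finset.sum_ite_eq, mul_comm]
    rw [hV]
    exact le_trans (Matrix.rank_mul_le_left W (Matrix.diagonal M)) hWr
  -- margin
  · intro i j
    have key : (∑ l, (M j * W l j) * x i l) + M j * (b j + ε j)
        = M j * (t j i + ε j) := by
      simp only [ht]
      simp only [mul_assoc, ← Finset.mul_sum]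
      ring
    rw [key, abs_mul, abs_of_pos (hMpos j)]
    have habs : 0 < |t j i + ε j| := abs_pos.mpr (htne j i)
    have := hMle j i
    calc (1:ℝ) = (1 / |t j i + ε j|) * |t j i + ε j| := by field_simp
      _ ≤ M j * |t j i + ε j| := by
          exact mul_le_mul_of_nonneg_right this habs.le
end

section
/- Let n, m ≥ 1 be integers, a₁,…,a_m ∈ ℝ^n and b₁,…,b_m ∈ ℝ, and for each subset I ⊆ [m] define the polyhedron P_I = {x ∈ ℝ^n : a_iᵀx ≤ b_i for all i ∈ I}. Assume P_{[m]} is nonempty. Then: (1) for every I ⊆ [m], the minimization of ½‖x‖₂² over x ∈ P_I has a unique minimizer, denoted x*_I; and (2) there exists a subset J ⊆ [m] with |J| ≤ n such that for every I ⊆ [m] with J ⊆ I, one has x*_I = x*_{[m]}. -/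
/-- The polyhedron `P_I = {x ∈ ℝ^n : aᵢᵀx ≤ bᵢ for all i ∈ I}`. -/
def polyhedron {n m : ℕ} (a : Fin m → EuclideanSpace ℝ (Fin n)) (b : Fin m → ℝ)
    (I : Finset (Fin m)) : Set (EuclideanSpace ℝ (Fin n)) :=
  {x | ∀ i ∈ I, (∑ l, a i l * x l) ≤ b i}

/-- `x` minimizes `½‖·‖₂²` over the set `P`. -/
noncomputable def IsMinNormPoint {n : ℕ} (P : Set (EuclideanSpace ℝ (Fin n)))
    (x : EuclideanSpace ℝ (Fin n)) : Prop :=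
  x ∈ P ∧ ∀ y ∈ P, (1 / 2 : ℝ) * ‖x‖ ^ 2 ≤ (1 / 2 : ℝ) * ‖y‖ ^ 2


open Finset

/-- Cone Carathéodory: any nonnegative combination can be rewritten as a nonnegative
combination over a linearly independent subfamily. -/
lemma cone_caratheodory {E : Type*} [AddCommGroup E] [Module ℝ E] {ι : Type*} [DecidableEq ι]
    (v : ι → E) :
    ∀ (k : ℕ) (s : Finset ι), s.card ≤ k → ∀ l : ι → ℝ, (∀ i ∈ s, 0 ≤ l i) →
    ∃ t ⊆ s, LinearIndependent ℝ (fun i : t => v i) ∧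
      ∃ μ : ι → ℝ, (∀ i ∈ t, 0 ≤ μ i) ∧ ∑ i ∈ t, μ i • v i = ∑ i ∈ s, l i • v i := by
  intro k
  induction k with
  | zero =>
    intro s hs l _
    have : s = ∅ := Finset.card_eq_zero.mp (Nat.le_zero.mp hs)
    subst this
    exact ⟨∅, subset_rfl, linearIndependent_empty_type, 0, by simp, by simp⟩
  | succ k ih =>
    intro s hs l hl
    by_cases hindep : LinearIndependent ℝ (fun i : s => v i)
    · exact ⟨s, subset_rfl, hindep, l, hl, rfl⟩
    · -- get a nontrivial dependence on s
      obtain ⟨g, hg0, j₀, hj₀⟩ := Fintype.not_linearIndependent_iff.mp hindep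
      set c : ι → ℝ := fun i => if h : i ∈ s then g ⟨i, h⟩ else 0 with hc
      have hcsum : ∑ i ∈ s, c i • v i = 0 := by
        rw [← Finset.sum_attach s (fun i => c i • v i)]
        rw [← hg0]
        apply Finset.sum_congr rfl
        intro i _
        simp [hc, i.2]
      have key : ∀ c : ι → ℝ, (∑ i ∈ s, c i • v i = 0) → (∃ j ∈ s, 0 < c j) →
          ∃ t ⊆ s, LinearIndependent ℝ (fun i : t => v i) ∧
            ∃ μ : ι → ℝ, (∀ i ∈ t, 0 ≤ μ i) ∧ ∑ i ∈ t, μ i • v i = ∑ i ∈ s, l i • v i := by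
        intro c hcsum ⟨j, hjs, hjc⟩
        classical
        set A : Finset ι := s.filter (fun i => 0 < c i) with hA
        have hAne : A.Nonempty := ⟨j, Finset.mem_filter.mpr ⟨hjs, hjc⟩⟩
        obtain ⟨i₀, hi₀A, hi₀min⟩ := Finset.exists_min_image A (fun i => l i / c i) hAne
        have hi₀s : i₀ ∈ s := (Finset.mem_filter.mp hi₀A).1
        have hci₀ : 0 < c i₀ := (Finset.mem_filter.mp hi₀A).2
        set r : ℝ := l i₀ / c i₀ with hr
        have hr0 : 0 ≤ r := div_nonneg (hl i₀ hi₀s) hci₀.le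
        set l' : ι → ℝ := fun i => l i - r * c i with hl'
        have hl'nonneg : ∀ i ∈ s, 0 ≤ l' i := by
          intro i his
          by_cases hci : 0 < c i
          · have := hi₀min i (Finset.mem_filter.mpr ⟨his, hci⟩)
            simp only [hl']
            rw [sub_nonneg]
            calc r * c i ≤ (l i / c i) * c i := by
                  exact mul_le_mul_of_nonneg_right this hci.le
              _ = l i := by field_simp
          · push_neg at hci
            have : r * c i ≤ 0 := mul_nonpos_of_nonneg_of_nonpos hr0 hci
            simp only [hl']
            linarith [hl i his]
        have hl'i₀ : l' i₀ = 0 := by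
          simp only [hl', hr]
          field_simp
          ring
        have hsum' : ∑ i ∈ s.erase i₀, l' i • v i = ∑ i ∈ s, l i • v i := by
          rw [Finset.sum_erase _ (by rw [hl'i₀, zero_smul])]
          simp only [hl', sub_smul, mul_smul]
          rw [Finset.sum_sub_distrib, ← Finset.smul_sum, hcsum, smul_zero, sub_zero]
        have hcard : (s.erase i₀).card ≤ k := by
          have := Finset.card_erase_of_mem hi₀s
          omega
        obtain ⟨t, hts, hind, μ, hμ, hμsum⟩ := ih (s.erase i₀) hcard l' (fun i hi => hl'nonneg i (Finset.mem_of_mem_erase hi))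
        exact ⟨t, hts.trans (Finset.erase_subset _ _), hind, μ, hμ, by rw [hμsum, hsum']⟩
      by_cases hpos : ∃ j ∈ s, 0 < c j
      · exact key c hcsum hpos
      · apply key (-c)
        · simpa [neg_smul] using hcsum
        · push_neg at hpos
          refine ⟨j₀, j₀.2, ?_⟩
          have h1 : c j₀ ≤ 0 := hpos j₀ j₀.2
          have h2 : c j₀ ≠ 0 := by
            simp only [hc, dif_pos j₀.2]
            simpa using hj₀
          simp only [Pi.neg_apply]
          cases lt_or_eq_of_le h1 with
          | inl h => linarith
          | inr h => exact absurd h h2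
open Finset

section
variable {E : Type*} [NormedAddCommGroup E] [NormedSpace ℝ E] [FiniteDimensional ℝ E]
variable {ι : Type*} [DecidableEq ι]

/-- The linear "combination" map from coefficients to vectors. -/
noncomputable def combMap (κ : Type*) [Fintype κ] (w : κ → E) : (κ → ℝ) →ₗ[ℝ] E where
  toFun μ := ∑ i, μ i • w i
  map_add' x y := by simp [add_smul, Finset.sum_add_distrib]
  map_smul' c x := by simp [smul_smul, Finset.smul_sum]

lemma isClosed_fg_cone (v : ι → E) (s : Finset ι) :
    IsClosed {x : E | ∃ l : ι → ℝ, (∀ i ∈ s, 0 ≤ l i) ∧ ∑ i ∈ s, l i • v i = x} := by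
  classical
  have main : {x : E | ∃ l : ι → ℝ, (∀ i ∈ s, 0 ≤ l i) ∧ ∑ i ∈ s, l i • v i = x} =
      ⋃ t ∈ {t : Finset ι | t ⊆ s ∧ LinearIndependent ℝ (fun i : t => v i)},
        (combMap (↥t) (fun i => v i)) '' {μ | ∀ i, 0 ≤ μ i} := by
    ext x
    simp only [Set.mem_setOf_eq, Set.mem_iUnion, Set.mem_image, exists_prop]
    constructor
    · rintro ⟨l, hl, rfl⟩
      obtain ⟨t, hts, hind, μ, hμ, hμsum⟩ := cone_caratheodory v s.card s le_rfl l hl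
      refine ⟨t, ⟨hts, hind⟩, (fun i : t => μ i), fun i => hμ i i.2, ?_⟩
      rw [← hμsum]
      simp only [combMap, LinearMap.coe_mk, AddHom.coe_mk]
      exact Finset.sum_coe_sort t (fun i => μ i • v i)
    · rintro ⟨t, ⟨hts, _⟩, μ, hμ, rfl⟩
      refine ⟨fun i => if h : i ∈ t then μ ⟨i, h⟩ else 0, ?_, ?_⟩
      · intro i _
        by_cases h : i ∈ t
        · simpa [h] using hμ ⟨i, h⟩
        · simp [h]
      · rw [← Finset.sum_subset hts (by intro i _ hni; simp [hni])]
        simp only [combMap, LinearMap.coe_mk, AddHom.coe_mk]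
        rw [← Finset.sum_coe_sort t (fun i => (if h : i ∈ t then μ ⟨i, h⟩ else 0) • v i)]
        apply Finset.sum_congr rfl
        intro i _
        simp [i.2]
  rw [main]
  apply Set.Finite.isClosed_biUnion
  · exact Set.Finite.subset (s.powerset : Finset (Finset ι)).finite_toSet
      (fun t ht => by simpa [Finset.mem_powerset] using ht.1)
  · rintro t ⟨hts, hind⟩
    have hker : LinearMap.ker (combMap (↥t) (fun i => v i)) = ⊥ := by
      rw [LinearMap.ker_eq_bot']
      intro g hg
      have := Fintype.linearIndependent_iff.mp hind g ?_
      · funext i; exact this i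
      · simpa [combMap] using hg
    have hemb := LinearMap.isClosedEmbedding_of_injective hker
    apply hemb.isClosedMap
    have : {μ : ↥t → ℝ | ∀ i, 0 ≤ μ i} = ⋂ i, {μ | 0 ≤ μ i} := by ext; simp [Set.mem_iInter]
    rw [this]
    exact isClosed_iInter fun i => isClosed_le continuous_const (continuous_apply i)

end

section
variable {F : Type*} [NormedAddCommGroup F] [InnerProductSpace ℝ F] [CompleteSpace F]

/-- Variational characterization of the minimum-norm point over a convex set. -/
lemma minnorm_iff {P : Set F} (hconv : Convex ℝ P) (x : F) :
    (x ∈ P ∧ ∀ y ∈ P, (1 / 2 : ℝ) * ‖x‖ ^ 2 ≤ (1 / 2 : ℝ) * ‖y‖ ^ 2) ↔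
      x ∈ P ∧ ∀ y ∈ P, 0 ≤ (inner ℝ x (y - x) : ℝ) := by
  constructor
  · rintro ⟨hx, hmin⟩
    refine ⟨hx, fun y hy => ?_⟩
    by_contra hneg
    push_neg at hneg
    set c : ℝ := inner ℝ x (y - x) with hc
    have key : ∀ t : ℝ, 0 < t → t ≤ 1 → 0 ≤ 2 * c + t * ‖y - x‖ ^ 2 := by
      intro t ht0 ht1
      have hz : x + t • (y - x) ∈ P := by
        have := hconv hx hy (by linarith : (0:ℝ) ≤ 1 - t) ht0.le (by ring)
        convert this using 1
        module
      have := hmin _ hz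
      have hexp : ‖x + t • (y - x)‖ ^ 2 = ‖x‖ ^ 2 + 2 * t * c + t ^ 2 * ‖y - x‖ ^ 2 := by
        rw [norm_add_sq_real, real_inner_smul_right, norm_smul]
        simp [abs_of_pos ht0]
        ring
      rw [hexp] at this
      nlinarith
    by_cases hyx : ‖y - x‖ = 0
    · have := key 1 one_pos le_rfl
      rw [hyx] at this
      nlinarith
    · have hyx' : 0 < ‖y - x‖ ^ 2 := by positivity
      set t : ℝ := min 1 (-c / ‖y - x‖ ^ 2) with ht
      have ht0 : 0 < t := lt_min one_pos (div_pos (by linarith) hyx')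
      have := key t ht0 (min_le_left _ _)
      have htle : t * ‖y - x‖ ^ 2 ≤ -c := by
        have : t ≤ -c / ‖y - x‖ ^ 2 := min_le_right _ _
        calc t * ‖y - x‖ ^ 2 ≤ (-c / ‖y - x‖ ^ 2) * ‖y - x‖ ^ 2 :=
              mul_le_mul_of_nonneg_right this hyx'.le
          _ = -c := by field_simp
      nlinarith
  · rintro ⟨hx, hvar⟩
    refine ⟨hx, fun y hy => ?_⟩
    have := hvar y hy
    have hexp : ‖y‖ ^ 2 = ‖x‖ ^ 2 + 2 * (inner ℝ x (y - x) : ℝ) + ‖y - x‖ ^ 2 := by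
      have h := norm_add_sq_real x (y - x)
      rw [add_sub_cancel] at h
      linarith
    nlinarith [sq_nonneg ‖y - x‖]

lemma existsUnique_minnorm {P : Set F} (hconv : Convex ℝ P) (hcl : IsClosed P)
    (hne : P.Nonempty) :
    ∃! x : F, x ∈ P ∧ ∀ y ∈ P, (1 / 2 : ℝ) * ‖x‖ ^ 2 ≤ (1 / 2 : ℝ) * ‖y‖ ^ 2 := by
  obtain ⟨v, hv, hvinf⟩ := exists_norm_eq_iInf_of_complete_convex hne hcl.isComplete hconv 0
  have hmin : ∀ y ∈ P, ‖v‖ ≤ ‖y‖ := by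
    intro y hy
    have hb : BddBelow (Set.range fun w : P => ‖(0:F) - ↑w‖) := by
      refine ⟨0, ?_⟩
      rintro _ ⟨w, rfl⟩
      positivity
    have := ciInf_le hb (⟨y, hy⟩ : P)
    rw [← hvinf] at this
    simpa using this
  refine ⟨v, ⟨hv, fun y hy => ?_⟩, ?_⟩
  · have := hmin y hy
    have h2 : ‖v‖ ^ 2 ≤ ‖y‖ ^ 2 := by nlinarith [norm_nonneg v, norm_nonneg y]
    linarith
  · rintro w ⟨hw, hwmin⟩
    have h1 : ‖w‖ ^ 2 ≤ ‖v‖ ^ 2 := by have := hwmin v hv; linarith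
    have h2 : ‖v‖ ^ 2 ≤ ‖w‖ ^ 2 := by nlinarith [hmin w hw, norm_nonneg v, norm_nonneg w]
    have heq : ‖w‖ ^ 2 = ‖v‖ ^ 2 := le_antisymm h1 h2
    have hmid : (1/2 : ℝ) • w + (1/2 : ℝ) • v ∈ P :=
      hconv hw hv (by norm_num) (by norm_num) (by norm_num)
    have hm := hwmin _ hmid
    have hnormmid : ‖(1/2 : ℝ) • w + (1/2 : ℝ) • v‖ ^ 2 =
        (1/4) * (‖w‖ ^ 2 + 2 * (inner ℝ w v : ℝ) + ‖v‖ ^ 2) := by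
      rw [← smul_add, norm_smul, mul_pow, norm_add_sq_real]
      norm_num
    rw [hnormmid] at hm
    have hsub : ‖w - v‖ ^ 2 = ‖w‖ ^ 2 - 2 * (inner ℝ w v : ℝ) + ‖v‖ ^ 2 := norm_sub_sq_real w v
    have : ‖w - v‖ ^ 2 ≤ 0 := by nlinarith
    have : ‖w - v‖ = 0 := by nlinarith [norm_nonneg (w - v)]
    have := norm_eq_zero.mp this
    exact sub_eq_zero.mp this

end

/-- Carathéodory-type theorem for projections onto polyhedra: if `P_{[m]}` is nonempty then
(1) for each `I ⊆ [m]` the minimization of `½‖x‖₂²` over `P_I` has a unique minimizer, and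
(2) there is `J ⊆ [m]` with `|J| ≤ n` such that for every `I ⊇ J` the minimizer over `P_I`
coincides with the minimizer over `P_{[m]}`. -/
theorem min_norm_point_caratheodory (n m : ℕ) (hn : 1 ≤ n) (hm : 1 ≤ m)
    (a : Fin m → EuclideanSpace ℝ (Fin n)) (b : Fin m → ℝ)
    (hne : (polyhedron a b Finset.univ).Nonempty) :
    (∀ I : Finset (Fin m), ∃! x, IsMinNormPoint (polyhedron a b I) x) ∧
    ∃ J : Finset (Fin m), J.card ≤ n ∧
      ∀ I : Finset (Fin m), J ⊆ I →
        ∀ xI xM, IsMinNormPoint (polyhedron a b I) xI →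
          IsMinNormPoint (polyhedron a b Finset.univ) xM → xI = xM := by
  classical
  have hinner : ∀ (i : Fin m) (x : EuclideanSpace ℝ (Fin n)),
      (∑ l, a i l * x l) = (inner ℝ (a i) x : ℝ) := by
    intro i x
    simp [PiLp.inner_apply, RCLike.inner_apply, conj_trivial]
    exact Finset.sum_congr rfl fun _ _ => mul_comm _ _
  have hmem : ∀ (I : Finset (Fin m)) (x : EuclideanSpace ℝ (Fin n)),
      x ∈ polyhedron a b I ↔ ∀ i ∈ I, (inner ℝ (a i) x : ℝ) ≤ b i := by
    intro I x
    simp only [polyhedron, Set.mem_setOf_eq, hinner]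
  have hmono : ∀ {I J : Finset (Fin m)}, J ⊆ I →
      polyhedron a b I ⊆ polyhedron a b J := by
    intro I J hJI x hx i hi
    exact hx i (hJI hi)
  have hconv : ∀ I : Finset (Fin m), Convex ℝ (polyhedron a b I) := by
    intro I x hx y hy α β hα hβ hαβ
    rw [hmem] at hx hy ⊢
    intro i hi
    rw [inner_add_right, real_inner_smul_right, real_inner_smul_right]
    calc α * (inner ℝ (a i) x : ℝ) + β * inner ℝ (a i) y ≤ α * b i + β * b i := by
          have h1 := hx i hi; have h2 := hy i hi
          have := mul_le_mul_of_nonneg_left h1 hα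
          have := mul_le_mul_of_nonneg_left h2 hβ
          linarith
      _ = b i := by rw [← add_mul, hαβ, one_mul]
  have hclosed : ∀ I : Finset (Fin m), IsClosed (polyhedron a b I) := by
    intro I
    have : polyhedron a b I = ⋂ i ∈ I, {x : EuclideanSpace ℝ (Fin n) | (inner ℝ (a i) x : ℝ) ≤ b i} := by
      ext x; simp [hmem, Set.mem_iInter]
    rw [this]
    exact isClosed_biInter fun i _ =>
      isClosed_le (Continuous.inner continuous_const continuous_id) continuous_const
  have hnonempty : ∀ I : Finset (Fin m), (polyhedron a b I).Nonempty :=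
    fun I => hne.mono (hmono (Finset.subset_univ I))
  have part1 : ∀ I : Finset (Fin m), ∃! x, IsMinNormPoint (polyhedron a b I) x := by
    intro I
    have := existsUnique_minnorm (hconv I) (hclosed I) (hnonempty I)
    simpa [IsMinNormPoint] using this
  refine ⟨part1, ?_⟩
  obtain ⟨xs, hxs, hxsuniq⟩ := part1 Finset.univ
  have hxs' := hxs
  simp only [IsMinNormPoint] at hxs'
  have hvar := (minnorm_iff (hconv Finset.univ) xs).mp hxs'
  -- tight constraint set
  set T : Finset (Fin m) := Finset.univ.filter (fun i => (inner ℝ (a i) xs : ℝ) = b i) with hT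
  set S : Set (EuclideanSpace ℝ (Fin n)) :=
    {x | ∃ l : Fin m → ℝ, (∀ i ∈ T, 0 ≤ l i) ∧ ∑ i ∈ T, l i • a i = x} with hS
  have hSclosed : IsClosed S := isClosed_fg_cone a T
  set K : ConvexCone ℝ (EuclideanSpace ℝ (Fin n)) :=
    { carrier := S
      smul_mem' := by
        rintro c hc x ⟨l, hl, rfl⟩
        exact ⟨fun i => c * l i, fun i hi => mul_nonneg hc.le (hl i hi), by
          rw [Finset.smul_sum]; exact Finset.sum_congr rfl fun i _ => (smul_smul c (l i) (a i)).symm⟩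
      add_mem' := by
        rintro x ⟨l, hl, rfl⟩ y ⟨l', hl', rfl⟩
        exact ⟨fun i => l i + l' i, fun i hi => add_nonneg (hl i hi) (hl' i hi), by
          rw [← Finset.sum_add_distrib]
          exact Finset.sum_congr rfl fun i _ => (add_smul (l i) (l' i) (a i))⟩ } with hK
  have hKne : ((K : Set (EuclideanSpace ℝ (Fin n)))).Nonempty :=
    ⟨0, ⟨0, fun i _ => le_rfl, by simp⟩⟩
  have haK : ∀ i ∈ T, a i ∈ K := by
    intro i hi
    exact ⟨fun j => if j = i then 1 else 0, fun j _ => by positivity, by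
      rw [Finset.sum_eq_single i]
      · simp
      · intro j _ hji; simp [hji]
      · intro h; exact absurd hi h⟩
  have hmne : (Finset.univ : Finset (Fin m)).Nonempty := ⟨⟨0, hm⟩, Finset.mem_univ _⟩
  have hg : ∀ i : Fin m, 0 ≤ b i - (inner ℝ (a i) xs : ℝ) := by
    intro i
    have := (hmem Finset.univ xs).mp hvar.1 i (Finset.mem_univ i)
    linarith
  have hgpos : ∀ i : Fin m, i ∉ T → 0 < b i - (inner ℝ (a i) xs : ℝ) := by
    intro i hi
    have hne' : (inner ℝ (a i) xs : ℝ) ≠ b i := by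
      intro h; exact hi (Finset.mem_filter.mpr ⟨Finset.mem_univ i, h⟩)
    cases lt_or_eq_of_le (by linarith [hg i] : (inner ℝ (a i) xs : ℝ) ≤ b i) with
    | inl h => linarith
    | inr h => exact absurd h hne'
  -- Farkas: -xs belongs to the cone generated by tight constraints
  have hfark : -xs ∈ S := by
    by_contra hnot
    let C : ProperCone ℝ (EuclideanSpace ℝ (Fin n)) :=
      { carrier := S
        add_mem' := fun hx hy => K.add_mem' hx hy
        zero_mem' := ⟨0, fun i _ => le_rfl, by simp⟩
        smul_mem' := by
          rintro c x ⟨l, hl, rfl⟩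
          exact ⟨fun i => (c : ℝ) * l i, fun i hi => mul_nonneg c.2 (hl i hi), by
            show ∑ i ∈ T, (fun i => (c : ℝ) * l i) i • a i = (c : ℝ) • ∑ i ∈ T, l i • a i
            rw [Finset.smul_sum]
            exact Finset.sum_congr rfl fun i _ => (smul_smul (c : ℝ) (l i) (a i)).symm⟩
        isClosed' := hSclosed }
    obtain ⟨y, hy1, hy2⟩ :=
      C.hyperplane_separation' (x₀ := -xs) hnot
    set d : EuclideanSpace ℝ (Fin n) := -y with hd
    have hdT : ∀ i ∈ T, (inner ℝ (a i) d : ℝ) ≤ 0 := by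
      intro i hi
      have := hy1 (a i) (haK i hi)
      rw [hd, inner_neg_right]
      linarith
    set f : Fin m → ℝ := fun i => if (inner ℝ (a i) d : ℝ) ≤ 0 then 1
      else (b i - (inner ℝ (a i) xs : ℝ)) / (inner ℝ (a i) d : ℝ) with hf
    have hfpos : ∀ i : Fin m, 0 < f i := by
      intro i
      by_cases h : (inner ℝ (a i) d : ℝ) ≤ 0
      · simp only [hf, if_pos h]; exact one_pos
      · push_neg at h
        have hiT : i ∉ T := fun hi => absurd (hdT i hi) (not_le.mpr h)
        simp only [hf, if_neg (not_le.mpr h)]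
        exact div_pos (hgpos i hiT) h
    set t : ℝ := Finset.univ.inf' hmne f with ht
    have ht0 : 0 < t := (Finset.lt_inf'_iff hmne).mpr fun i _ => hfpos i
    have htle : ∀ i : Fin m, t * (inner ℝ (a i) d : ℝ) ≤ b i - (inner ℝ (a i) xs : ℝ) := by
      intro i
      have hti : t ≤ f i := Finset.inf'_le f (Finset.mem_univ i)
      by_cases h : (inner ℝ (a i) d : ℝ) ≤ 0
      · have : t * (inner ℝ (a i) d : ℝ) ≤ 0 := mul_nonpos_of_nonneg_of_nonpos ht0.le h
        linarith [hg i]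
      · push_neg at h
        rw [hf] at hti
        simp only [if_neg (not_le.mpr h)] at hti
        calc t * (inner ℝ (a i) d : ℝ)
            ≤ ((b i - (inner ℝ (a i) xs : ℝ)) / (inner ℝ (a i) d : ℝ)) * (inner ℝ (a i) d : ℝ) :=
              mul_le_mul_of_nonneg_right hti h.le
          _ = b i - (inner ℝ (a i) xs : ℝ) := div_mul_cancel₀ _ (ne_of_gt h)
    have hfeas : xs + t • d ∈ polyhedron a b Finset.univ := by
      rw [hmem]
      intro i _
      rw [inner_add_right, real_inner_smul_right]
      linarith [htle i]
    have := hvar.2 _ hfeas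
    rw [add_sub_cancel_left, real_inner_smul_right] at this
    have hxd : 0 ≤ (inner ℝ xs d : ℝ) := nonneg_of_mul_nonneg_right this ht0
    rw [hd, inner_neg_right] at hxd
    rw [inner_neg_left] at hy2
    linarith
  obtain ⟨l, hl, hlsum⟩ := hfark
  obtain ⟨J, hJT, hJind, μ, hμ, hμsum⟩ := cone_caratheodory a T.card T le_rfl l hl
  have hcard : J.card ≤ n := by
    have := hJind.fintype_card_le_finrank
    rwa [Fintype.card_coe, finrank_euclideanSpace_fin] at this
  refine ⟨J, hcard, ?_⟩
  -- xs is the min-norm point over P_J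
  have hxsJ : IsMinNormPoint (polyhedron a b J) xs := by
    have hxsmem : xs ∈ polyhedron a b J := hmono (Finset.subset_univ J) hvar.1
    have hxsrep : ∑ i ∈ J, μ i • a i = -xs := by rw [hμsum, hlsum]
    simp only [IsMinNormPoint]
    rw [minnorm_iff (hconv J)]
    refine ⟨hxsmem, fun y hy => ?_⟩
    have : (inner ℝ xs (y - xs) : ℝ) = ∑ i ∈ J, μ i * (b i - (inner ℝ (a i) y : ℝ)) := by
      have h1 : (inner ℝ xs (y - xs) : ℝ) = -(inner ℝ (∑ i ∈ J, μ i • a i) (y - xs) : ℝ) := by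
        rw [hxsrep]; rw [inner_neg_left]; ring
      rw [h1, sum_inner]
      rw [← Finset.sum_neg_distrib]
      apply Finset.sum_congr rfl
      intro i hi
      have hiT : i ∈ T := hJT hi
      have htight : (inner ℝ (a i) xs : ℝ) = b i := (Finset.mem_filter.mp hiT).2
      rw [real_inner_smul_left, inner_sub_right, htight]
      ring
    rw [this]
    apply Finset.sum_nonneg
    intro i hi
    have := (hmem J y).mp hy i hi
    exact mul_nonneg (hμ i hi) (by linarith)
  intro I hJI xI xM hxI hxM
  have hxMeq : xM = xs := hxsuniq xM hxM
  have hxsI : IsMinNormPoint (polyhedron a b I) xs := by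
    constructor
    · exact hmono (Finset.subset_univ I) hvar.1
    · intro y hy
      exact hxsJ.2 y (hmono hJI hy)
  have hxIeq : xI = xs := (part1 I).unique hxI hxsI
  rw [hxIeq, hxMeq]
end

section
/- Let P be a joint probability distribution on [0,1]^d × {±1} with marginal P_X and posterior η(x) = P(Y = 1 | X = x), and suppose η admits a version that is L-Lipschitz with respect to the Euclidean norm on [0,1]^d. Let R ⊆ [0,1]^d be an axis-aligned cube of side length ℓ (intersected with [0,1]^d). Then min{ ∫_R η dP_X, ∫_R (1 − η) dP_X } − ∫_R min{η(x), 1 − η(x)} dP_X(x) ≤ 2 L √d · ℓ · P_X(R). -/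
open MeasureTheory

/-- For an `L`-Lipschitz posterior `η` and an axis-aligned cube `R` of side `ℓ`
(intersected with `[0,1]^d`), the excess of the cell-majority error
`min{∫_R η dP_X, ∫_R (1-η) dP_X}` over the Bayes error `∫_R min{η, 1-η} dP_X`
is at most `2L√d·ℓ·P_X(R)`. -/
theorem cube_majority_excess_error (d : ℕ) (hd : 1 ≤ d) (L : ℝ)
    (P : Measure (EuclideanSpace ℝ (Fin d) × ℝ)) [IsProbabilityMeasure P]
    -- P is supported on [0,1]^d × {±1}
    (hsupp : P {p | (∀ i, p.1 i ∈ Set.Icc (0 : ℝ) 1) ∧ (p.2 = 1 ∨ p.2 = -1)} = 1)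
    -- η is a version of the posterior class probability x ↦ P(Y = 1 | X = x)
    (η : EuclideanSpace ℝ (Fin d) → ℝ) (hηmeas : Measurable η)
    (hηbd : ∀ x, 0 ≤ η x ∧ η x ≤ 1)
    (hpost : ∀ A : Set (EuclideanSpace ℝ (Fin d)), MeasurableSet A →
      (P (A ×ˢ ({1} : Set ℝ))).toReal = ∫ x in A, η x ∂(P.map Prod.fst))
    -- η is L-Lipschitz on [0,1]^d w.r.t. the Euclidean norm
    (hlip : ∀ x, (∀ i, x i ∈ Set.Icc (0 : ℝ) 1) → ∀ x', (∀ i, x' i ∈ Set.Icc (0 : ℝ) 1) →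
      |η x - η x'| ≤ L * ‖x - x'‖)
    -- R is an axis-aligned cube of side length ℓ, intersected with [0,1]^d
    (a : Fin d → ℝ) (ℓ : ℝ) (R : Set (EuclideanSpace ℝ (Fin d)))
    (hRdef : R = {x : EuclideanSpace ℝ (Fin d) |
      (∀ j, x j ∈ Set.Icc (a j) (a j + ℓ)) ∧ ∀ j, x j ∈ Set.Icc (0 : ℝ) 1}) :
    min (∫ x in R, η x ∂(P.map Prod.fst)) (∫ x in R, (1 - η x) ∂(P.map Prod.fst)) -
        (∫ x in R, min (η x) (1 - η x) ∂(P.map Prod.fst)) ≤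
      2 * L * Real.sqrt d * ℓ * ((P.map Prod.fst) R).toReal := by
  classical
  set μ := P.map Prod.fst with hμ
  have hμprob : IsProbabilityMeasure μ := Measure.isProbabilityMeasure_map measurable_fst.aemeasurable
  -- L is nonnegative
  have hL : 0 ≤ L := by
    have h01 : ∀ j, (0 : EuclideanSpace ℝ (Fin d)) j ∈ Set.Icc (0:ℝ) 1 := by
      intro j; simp
    set i0 : Fin d := ⟨0, hd⟩
    have hmem : ∀ j, (EuclideanSpace.single i0 (1:ℝ)) j ∈ Set.Icc (0:ℝ) 1 := by
      intro j
      rw [EuclideanSpace.single_apply]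
      by_cases h : j = i0 <;> simp [h]
    have h := hlip (EuclideanSpace.single i0 (1:ℝ)) hmem 0 h01
    have hn : ‖(EuclideanSpace.single i0 (1:ℝ)) - 0‖ = 1 := by
      simp [EuclideanSpace.norm_single]
    rw [hn, mul_one] at h
    exact le_trans (abs_nonneg _) h
  rcases Set.eq_empty_or_nonempty R with hRe | ⟨x0, hx0⟩
  · simp [hRe]
  -- ℓ ≥ 0
  have hx0' := hRdef ▸ hx0
  obtain ⟨hx0a, hx0b⟩ := hx0'
  have hℓ : 0 ≤ ℓ := by
    have := hx0a ⟨0, hd⟩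
    have h1 := this.1; have h2 := this.2
    linarith
  -- R is measurable
  have hRmeas : MeasurableSet R := by
    rw [hRdef]
    have : {x : EuclideanSpace ℝ (Fin d) |
        (∀ j, x j ∈ Set.Icc (a j) (a j + ℓ)) ∧ ∀ j, x j ∈ Set.Icc (0 : ℝ) 1} =
        (⋂ j, (fun x : EuclideanSpace ℝ (Fin d) => x j) ⁻¹' Set.Icc (a j) (a j + ℓ)) ∩
        (⋂ j, (fun x : EuclideanSpace ℝ (Fin d) => x j) ⁻¹' Set.Icc (0:ℝ) 1) := by
      ext x; simp [Set.mem_iInter]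
    rw [this]
    exact (MeasurableSet.iInter fun j =>
        ((measurable_pi_apply j).comp (WithLp.measurable_ofLp 2 (Fin d → ℝ))) measurableSet_Icc).inter
      (MeasurableSet.iInter fun j => ((measurable_pi_apply j).comp (WithLp.measurable_ofLp 2 (Fin d → ℝ))) measurableSet_Icc)
  -- R ⊆ [0,1]^d and diameter bound
  set c : ℝ := L * Real.sqrt d * ℓ with hc
  have hdiam : ∀ x ∈ R, ∀ y ∈ R, |η x - η y| ≤ c := by
    intro x hx y hy
    rw [hRdef] at hx hy
    have hnorm : ‖x - y‖ ≤ Real.sqrt d * ℓ := by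
      have : ‖x - y‖ = Real.sqrt (∑ i, ‖(x - y) i‖ ^ 2) := EuclideanSpace.norm_eq _
      rw [this]
      have hbd : (∑ i, ‖(x - y) i‖ ^ 2) ≤ ∑ _i : Fin d, ℓ ^ 2 := by
        apply Finset.sum_le_sum
        intro i _
        have hxi := hx.1 i; have hyi := hy.1 i
        have : |x i - y i| ≤ ℓ := by
          rw [abs_le]; constructor <;> [linarith [hxi.1, hyi.2]; linarith [hxi.2, hyi.1]]
        calc ‖(x - y) i‖ ^ 2 = |x i - y i| ^ 2 := by
              simp [PiLp.sub_apply, Real.norm_eq_abs]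
          _ ≤ ℓ ^ 2 := by nlinarith [abs_nonneg (x i - y i)]
      calc Real.sqrt (∑ i, ‖(x - y) i‖ ^ 2) ≤ Real.sqrt (∑ _i : Fin d, ℓ ^ 2) :=
            Real.sqrt_le_sqrt hbd
        _ = Real.sqrt (d * ℓ ^ 2) := by rw [Finset.sum_const]; simp [mul_comm]
        _ = Real.sqrt d * ℓ := by
            rw [Real.sqrt_mul (by positivity)]
            rw [Real.sqrt_sq hℓ]
    calc |η x - η y| ≤ L * ‖x - y‖ := hlip x hx.2 y hy.2
      _ ≤ L * (Real.sqrt d * ℓ) := mul_le_mul_of_nonneg_left hnorm hL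
      _ = c := by rw [hc]; ring
  -- integrability
  have hμRfin : μ R ≠ ⊤ := measure_ne_top μ R
  set m : ℝ := (μ R).toReal with hm
  have hm0 : 0 ≤ m := ENNReal.toReal_nonneg
  have hboundint : ∀ (f : EuclideanSpace ℝ (Fin d) → ℝ), Measurable f →
      (∀ x, ‖f x‖ ≤ 1) → IntegrableOn f R μ := by
    intro f hf hb
    exact (integrable_const (1:ℝ)).mono' hf.aestronglyMeasurable
      (Filter.Eventually.of_forall hb)
  have hint1 : IntegrableOn η R μ := by
    apply hboundint _ hηmeas
    intro x; rw [Real.norm_eq_abs, abs_le]; exact ⟨by linarith [(hηbd x).1], (hηbd x).2⟩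
  have hint2 : IntegrableOn (fun x => 1 - η x) R μ := by
    apply hboundint (fun x => 1 - η x) (measurable_const.sub hηmeas)
    intro x; rw [Real.norm_eq_abs, abs_le]
    constructor <;> [linarith [(hηbd x).2]; linarith [(hηbd x).1]]
  have hint3 : IntegrableOn (fun x => min (η x) (1 - η x)) R μ := by
    apply hboundint (fun x => min (η x) (1 - η x)) (hηmeas.min (measurable_const.sub hηmeas))
    intro x; rw [Real.norm_eq_abs, abs_le]
    constructor
    · rcases min_cases (η x) (1 - η x) with ⟨h, _⟩ | ⟨h, _⟩ <;> rw [h] <;>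
      [linarith [(hηbd x).1]; linarith [(hηbd x).2]]
    · exact le_trans (min_le_left _ _) (hηbd x).2
  -- integral bounds
  have h1 : ∫ x in R, η x ∂μ ≤ (η x0 + c) * m := by
    calc ∫ x in R, η x ∂μ ≤ ∫ _x in R, (η x0 + c) ∂μ := by
          apply setIntegral_mono_on hint1 (integrableOn_const hμRfin) hRmeas
          intro x hx
          have := hdiam x hx x0 hx0
          rw [abs_le] at this; linarith [this.2]
      _ = (η x0 + c) * m := by rw [setIntegral_const]; rw [smul_eq_mul, measureReal_def]; ring
  have h2 : ∫ x in R, (1 - η x) ∂μ ≤ (1 - η x0 + c) * m := by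
    calc ∫ x in R, (1 - η x) ∂μ ≤ ∫ _x in R, (1 - η x0 + c) ∂μ := by
          apply setIntegral_mono_on hint2 (integrableOn_const hμRfin) hRmeas
          intro x hx
          have := hdiam x hx x0 hx0
          rw [abs_le] at this; linarith [this.1]
      _ = (1 - η x0 + c) * m := by rw [setIntegral_const]; rw [smul_eq_mul, measureReal_def]; ring
  have h3 : (min (η x0) (1 - η x0) - c) * m ≤ ∫ x in R, min (η x) (1 - η x) ∂μ := by
    calc (min (η x0) (1 - η x0) - c) * m = ∫ _x in R, (min (η x0) (1 - η x0) - c) ∂μ := by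
          rw [setIntegral_const]; rw [smul_eq_mul, measureReal_def]; ring
      _ ≤ ∫ x in R, min (η x) (1 - η x) ∂μ := by
          apply setIntegral_mono_on (integrableOn_const hμRfin) hint3 hRmeas
          intro x hx
          have := hdiam x hx x0 hx0
          rw [abs_le] at this
          apply le_min
          · calc min (η x0) (1 - η x0) - c ≤ η x0 - c := by
                  linarith [min_le_left (η x0) (1 - η x0)]
              _ ≤ η x := by linarith [this.1]
          · calc min (η x0) (1 - η x0) - c ≤ (1 - η x0) - c := by
                  linarith [min_le_right (η x0) (1 - η x0)]
              _ ≤ 1 - η x := by linarith [this.2]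
  have hgoal : min (∫ x in R, η x ∂μ) (∫ x in R, (1 - η x) ∂μ) -
      (∫ x in R, min (η x) (1 - η x) ∂μ) ≤ 2 * c * m := by
    rcases le_total (η x0) (1 - η x0) with h | h
    · have := min_le_left (∫ x in R, η x ∂μ) (∫ x in R, (1 - η x) ∂μ)
      rw [min_eq_left h] at h3
      linarith
    · have := min_le_right (∫ x in R, η x ∂μ) (∫ x in R, (1 - η x) ∂μ)
      rw [min_eq_right h] at h3
      linarith
  calc min (∫ x in R, η x ∂μ) (∫ x in R, (1 - η x) ∂μ) -
      (∫ x in R, min (η x) (1 - η x) ∂μ) ≤ 2 * c * m := hgoal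
    _ = 2 * L * Real.sqrt d * ℓ * m := by rw [hc]; ring
end
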